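/- arXiv:2310.02012 — 6 statements merged into one kernel-verified Lean document; each statement's English description precedes it below -/
import Mathlib

section
/- Let X ∈ ℝ^{d×d} be nonsingular, let W ∈ ℝ^{d×d} be an orthogonal matrix, and set X' = WX. Then I(BN(X')) ≥ (1 + V/M²)·I(X), where V is the (population) variance of the d row norms {‖X'_{j·}‖}_{j=1}^d of X' and M is their mean. -/
open MeasureTheory Matrix

/-- Euclidean norm of the `i`-th row of a square real matrix. -/
noncomputable def rowNorm {d : ℕ} (X : Matrix (Fin d) (Fin d) ℝ) (i : Fin d) : ℝ :=
  Real.sqrt (∑ j, X i j ^ 2)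

/-- Batch normalization (without mean reduction): each row is rescaled to unit norm. -/
noncomputable def BN {d : ℕ} (X : Matrix (Fin d) (Fin d) ℝ) : Matrix (Fin d) (Fin d) ℝ :=
  Matrix.of fun i j => X i j / rowNorm X i

/-- Isometry gap `φ(X) = -log( det(XᵀX)^{1/d} / ((1/d) Tr(XᵀX)) )`. -/
noncomputable def isoGap {d : ℕ} (X : Matrix (Fin d) (Fin d) ℝ) : ℝ :=
  - Real.log ((Xᵀ * X).det ^ ((1 : ℝ) / d) / ((1 / d : ℝ) * (Xᵀ * X).trace))

/-- Isometry `I(X) = exp(-φ(X))`. -/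
noncomputable def isoI {d : ℕ} (X : Matrix (Fin d) (Fin d) ℝ) : ℝ :=
  Real.exp (- isoGap X)

/-- for nonsingular `X` and orthogonal `W`, with `X' = W X`,
`I(BN(X')) ≥ (1 + variance/mean²) · I(X)` where variance and mean are taken over
the row norms of `X'`. -/
theorem isoI_BN_rotation_ge {d : ℕ} (hd : 0 < d)
    (X W : Matrix (Fin d) (Fin d) ℝ) (hX : X.det ≠ 0) (hW : Wᵀ * W = 1) :
    isoI (BN (W * X)) ≥
      (1 + ((1 / d : ℝ) * ∑ j, rowNorm (W * X) j ^ 2 -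
              ((1 / d : ℝ) * ∑ j, rowNorm (W * X) j) ^ 2) /
            ((1 / d : ℝ) * ∑ j, rowNorm (W * X) j) ^ 2) * isoI X := by
  set X' := W * X with hX'def
  have hdpos : (0:ℝ) < d := Nat.cast_pos.mpr hd
  have hWdet : W.det * W.det = 1 := by
    have h := congrArg Matrix.det hW
    simpa [Matrix.det_mul, Matrix.det_transpose, mul_comm] using h
  have hdetX' : X'.det ≠ 0 := by
    rw [hX'def, Matrix.det_mul]
    intro h
    rcases mul_eq_zero.mp h with h | h
    · rw [h, zero_mul] at hWdet; exact zero_ne_one hWdet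
    · exact hX h
  set r : Fin d → ℝ := rowNorm X' with hrdef
  have hrow : ∀ i, 0 < ∑ j, X' i j ^ 2 := by
    intro i
    rcases lt_or_eq_of_le (Finset.sum_nonneg fun j _ => sq_nonneg (X' i j)) with h | h
    · exact h
    · exfalso
      apply hdetX'
      apply Matrix.det_eq_zero_of_row_eq_zero i
      intro j
      have := (Finset.sum_eq_zero_iff_of_nonneg
        (fun j _ => sq_nonneg (X' i j))).mp h.symm j (Finset.mem_univ j)
      exact (pow_eq_zero_iff two_ne_zero).mp this
  have hrpos : ∀ i, 0 < r i := fun i => Real.sqrt_pos.mpr (hrow i)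
  have hrsq : ∀ i, r i ^ 2 = ∑ j, X' i j ^ 2 := fun i => Real.sq_sqrt (le_of_lt (hrow i))
  -- trace formula
  have htr : ∀ A : Matrix (Fin d) (Fin d) ℝ, (Aᵀ * A).trace = ∑ i, ∑ j, A i j ^ 2 := by
    intro A
    rw [Matrix.trace, Finset.sum_comm]
    simp [Matrix.mul_apply, Matrix.diag, sq]
  -- BN as diagonal scaling
  have hBN : BN X' = Matrix.diagonal (fun i => (r i)⁻¹) * X' := by
    ext i j
    rw [Matrix.diagonal_mul]
    simp [BN, hrdef, div_eq_inv_mul]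
  have hdetBN : (BN X').det = (∏ i, (r i)⁻¹) * X'.det := by
    rw [hBN, Matrix.det_mul, Matrix.det_diagonal]
  -- XᵀX = X'ᵀX'
  have hXtX : X'ᵀ * X' = Xᵀ * X := by
    rw [hX'def, Matrix.transpose_mul, Matrix.mul_assoc, ← Matrix.mul_assoc Wᵀ, hW,
      Matrix.one_mul]
  -- trace computations
  have htrX : (Xᵀ * X).trace = ∑ i, r i ^ 2 := by
    rw [← hXtX, htr]
    exact Finset.sum_congr rfl fun i _ => (hrsq i).symm
  have htrBN : ((BN X')ᵀ * BN X').trace = (d : ℝ) := by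
    rw [htr]
    have : ∀ i : Fin d, ∑ j, (BN X') i j ^ 2 = 1 := by
      intro i
      have : ∑ j, (BN X') i j ^ 2 = (∑ j, X' i j ^ 2) / r i ^ 2 := by
        rw [Finset.sum_div]
        refine Finset.sum_congr rfl fun j _ => ?_
        simp [BN, hrdef, div_pow]
      rw [this, ← hrsq i, div_self (pow_pos (hrpos i) 2).ne']
    simp [this]
  -- determinant computations
  have hdetXtX : (Xᵀ * X).det = X.det ^ 2 := by
    rw [Matrix.det_mul, Matrix.det_transpose, sq]
  have hdetX'sq : X'.det ^ 2 = X.det ^ 2 := by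
    rw [hX'def, Matrix.det_mul, mul_pow, sq, hWdet, one_mul]
  have hdetBNtBN : ((BN X')ᵀ * BN X').det = X.det ^ 2 / (∏ i, r i) ^ 2 := by
    have hinv : (∏ i, (r i)⁻¹) = (∏ i, r i)⁻¹ := by
      simp
    rw [Matrix.det_mul, Matrix.det_transpose, ← sq, hdetBN, mul_pow, ← hdetX'sq, hinv,
      inv_pow, inv_mul_eq_div]
  set P := ∏ i, r i with hPdef
  have hPpos : 0 < P := Finset.prod_pos fun i _ => hrpos i
  set S1 := ∑ i, r i with hS1def
  set S2 := ∑ i, r i ^ 2 with hS2def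
  haveI : Nonempty (Fin d) := ⟨⟨0, hd⟩⟩
  have hne : (Finset.univ : Finset (Fin d)).Nonempty := Finset.univ_nonempty
  have hS1pos : 0 < S1 := Finset.sum_pos (fun i _ => hrpos i) hne
  have hS2pos : 0 < S2 := Finset.sum_pos (fun i _ => pow_pos (hrpos i) 2) hne
  have hD : (0:ℝ) < X.det ^ 2 := by positivity
  -- closed forms for isoI
  have hisoI : ∀ A : Matrix (Fin d) (Fin d) ℝ,
      0 < (Aᵀ * A).det ^ ((1 : ℝ) / d) / ((1 / d : ℝ) * (Aᵀ * A).trace) →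
      isoI A = (Aᵀ * A).det ^ ((1 : ℝ) / d) / ((1 / d : ℝ) * (Aᵀ * A).trace) := by
    intro A h
    rw [isoI, isoGap, neg_neg, Real.exp_log h]
  have hqBN : 0 < ((BN X')ᵀ * BN X').det ^ ((1:ℝ)/d) /
      ((1/d : ℝ) * ((BN X')ᵀ * BN X').trace) := by
    rw [hdetBNtBN, htrBN]
    exact div_pos (Real.rpow_pos_of_pos (div_pos hD (pow_pos hPpos 2)) _)
      (mul_pos (one_div_pos.mpr hdpos) hdpos)
  have hqX : 0 < (Xᵀ * X).det ^ ((1:ℝ)/d) / ((1/d : ℝ) * (Xᵀ * X).trace) := by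
    rw [hdetXtX, htrX]
    exact div_pos (Real.rpow_pos_of_pos hD _) (mul_pos (one_div_pos.mpr hdpos) hS2pos)
  have hL : isoI (BN X') = (X.det ^ 2) ^ ((1:ℝ)/d) / (P ^ 2) ^ ((1:ℝ)/d) := by
    rw [hisoI _ hqBN, hdetBNtBN, htrBN, Real.div_rpow hD.le (pow_pos hPpos 2).le,
      one_div, inv_mul_cancel₀ (ne_of_gt hdpos), div_one]
  have hR : isoI X = (X.det ^ 2) ^ ((1:ℝ)/d) / ((1/d : ℝ) * S2) := by
    rw [hisoI _ hqX, hdetXtX, htrX]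
  -- AM-GM
  have hAM : P ^ ((1:ℝ)/d) ≤ (1/d : ℝ) * S1 := by
    have h := Real.geom_mean_le_arith_mean_weighted Finset.univ (fun _ => (1/d : ℝ)) r
      (fun i _ => by positivity)
      (by rw [Finset.sum_const, Finset.card_univ, Fintype.card_fin, nsmul_eq_mul]; field_simp)
      (fun i _ => (hrpos i).le)
    rwa [Real.finset_prod_rpow _ _ (fun i _ => (hrpos i).le), ← Finset.mul_sum] at h
  have hkey : (P ^ 2) ^ ((1:ℝ)/d) ≤ ((1/d : ℝ) * S1) ^ 2 := by
    have h2 : (P ^ 2) ^ ((1:ℝ)/d) = (P ^ ((1:ℝ)/d)) ^ 2 := by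
      rw [← Real.rpow_natCast P 2, ← Real.rpow_mul hPpos.le, mul_comm,
        Real.rpow_mul hPpos.le, Real.rpow_natCast]
    rw [h2]
    exact pow_le_pow_left₀ (Real.rpow_nonneg hPpos.le _) hAM 2
  set M := (1/d : ℝ) * S1 with hMdef
  have hMpos : 0 < M := mul_pos (one_div_pos.mpr hdpos) hS1pos
  have hM' : M ≠ 0 := hMpos.ne'
  have hA' : (1/d : ℝ) * S2 ≠ 0 := (mul_pos (one_div_pos.mpr hdpos) hS2pos).ne'
  have hfact : 1 + ((1/d : ℝ) * S2 - M ^ 2) / M ^ 2 = ((1/d : ℝ) * S2) / M ^ 2 := by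
    field_simp
    ring
  rw [hL, hR, ge_iff_le, hfact]
  have heq : ((1/d : ℝ) * S2) / M ^ 2 * ((X.det ^ 2) ^ ((1:ℝ)/d) / ((1/d : ℝ) * S2))
      = (X.det ^ 2) ^ ((1:ℝ)/d) / M ^ 2 := by
    field_simp
  rw [heq]
  exact div_le_div_of_nonneg_left (Real.rpow_nonneg hD.le _)
    (Real.rpow_pos_of_pos (pow_pos hPpos 2) _) hkey
end

section
/- Let d ≥ 2 and let X ∈ ℝ^{d×d} be a nonsingular matrix whose rows all have unit Euclidean norm. Let λ_1, …, λ_d be the eigenvalues of XXᵀ, and let W be a random matrix distributed according to the Haar probability measure on the orthogonal group O(d). Then E_W[ φ(BN(WX)) ] ≤ φ(X) + log( 1 − Σ_{k=1}^d (λ_k − 1)² / (2d²(d+2)) ); moreover the logarithmic term is ≤ 0. -/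
open MeasureTheory Matrix

/-- Matrices inherit the (Borel) product measurable structure of `Fin d → Fin d → ℝ`. -/
instance matrixMeasurableSpace {d : ℕ} : MeasurableSpace (Matrix (Fin d) (Fin d) ℝ) :=
  (inferInstance : MeasurableSpace (Fin d → Fin d → ℝ))

/-- `μ` is the Haar probability measure on the orthogonal group `O(d)`, viewed as a
measure on `d × d` real matrices: it is a probability measure, concentrated on the
orthogonal matrices, and invariant under left and right translation by any orthogonal
matrix (these properties characterize the Haar probability measure uniquely). -/
def IsHaarOrthogonal {d : ℕ} (μ : Measure (Matrix (Fin d) (Fin d) ℝ)) : Prop :=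
  IsProbabilityMeasure μ ∧
  (∀ᵐ W ∂μ, Wᵀ * W = 1) ∧
  ∀ U : Matrix (Fin d) (Fin d) ℝ, Uᵀ * U = 1 →
    μ.map (fun W => U * W) = μ ∧ μ.map (fun W => W * U) = μ

namespace HaarBN

variable {d : ℕ}

/-- Givens rotation in coordinates `a b`. -/
noncomputable def rotM (a b : Fin d) (c s : ℝ) : Matrix (Fin d) (Fin d) ℝ :=
  Matrix.of fun p q =>
    if p = a then (if q = a then c else if q = b then s else 0)
    else if p = b then (if q = a then -s else if q = b then c else 0)
    else if p = q then 1 else 0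

lemma rotM_apply (a b : Fin d) (c s : ℝ) (p q : Fin d) :
    rotM a b c s p q =
      if p = a then (if q = a then c else if q = b then s else 0)
      else if p = b then (if q = a then -s else if q = b then c else 0)
      else if p = q then 1 else 0 := rfl

lemma sum_split (a b : Fin d) (hab : a ≠ b) (f : Fin d → ℝ) :
    ∑ r, f r = f a + f b + ∑ r ∈ (Finset.univ.erase a).erase b, f r := by
  rw [← Finset.add_sum_erase _ f (Finset.mem_univ a),
    ← Finset.add_sum_erase _ f (Finset.mem_erase.2 ⟨hab.symm, Finset.mem_univ b⟩),
    Finset.erase_right_comm]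
  ring

lemma rotM_orth (a b : Fin d) (hab : a ≠ b) (c s : ℝ) (h : c ^ 2 + s ^ 2 = 1) :
    (rotM a b c s)ᵀ * rotM a b c s = 1 := by
  ext p q
  rw [Matrix.mul_apply, Matrix.one_apply]
  simp only [Matrix.transpose_apply]
  rw [sum_split a b hab]
  have hrest : ∑ r ∈ (Finset.univ.erase a).erase b, rotM a b c s r p * rotM a b c s r q
      = if p = q ∧ p ≠ a ∧ p ≠ b then 1 else 0 := by
    have key : ∀ r ∈ (Finset.univ.erase a).erase b, rotM a b c s r p * rotM a b c s r q
        = if r = p then (if p = q ∧ p ≠ a ∧ p ≠ b then 1 else 0) else 0 := by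
      intro r hr
      have hrb : r ≠ b := (Finset.mem_erase.1 hr).1
      have hra : r ≠ a := (Finset.mem_erase.1 (Finset.mem_erase.1 hr).2).1
      rw [rotM_apply, rotM_apply, if_neg hra, if_neg hrb, if_neg hra, if_neg hrb]
      by_cases hrp : r = p
      · subst hrp; simp [hra, hrb]
      · simp [hrp]
    rw [Finset.sum_congr rfl key, Finset.sum_ite_eq']
    by_cases hpa : p = a <;> by_cases hpb : p = b <;>
      simp [Finset.mem_erase, hpa, hpb]
  rw [hrest]
  clear hrest
  simp only [rotM_apply]
  by_cases hpa : p = a <;> by_cases hpb : p = b <;> by_cases hqa : q = a <;>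
    by_cases hqb : q = b <;>
  first
    | exact absurd (hpa.symm.trans hpb) hab
    | exact absurd (hqa.symm.trans hqb) hab
    | (simp [hpa, hpb, hqa, hqb, hab, Ne.symm hab]
       try (split_ifs <;> simp_all)
       try ring_nf
       try nlinarith [h]
       try (intro h'; subst h'; simp_all))

/-- Action of right multiplication by `rotM` on entries. -/
lemma mul_rotM_apply (W : Matrix (Fin d) (Fin d) ℝ) (a b : Fin d) (hab : a ≠ b) (c s : ℝ)
    (i q : Fin d) :
    (W * rotM a b c s) i q =
      if q = a then c * W i a - s * W i b
      else if q = b then s * W i a + c * W i b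
      else W i q := by
  rw [Matrix.mul_apply, sum_split a b hab]
  have hrest : ∑ r ∈ (Finset.univ.erase a).erase b, W i r * rotM a b c s r q
      = if q ≠ a ∧ q ≠ b then W i q else 0 := by
    have key : ∀ r ∈ (Finset.univ.erase a).erase b, W i r * rotM a b c s r q
        = if r = q then (if q ≠ a ∧ q ≠ b then W i q else 0) else 0 := by
      intro r hr
      have hrb : r ≠ b := (Finset.mem_erase.1 hr).1
      have hra : r ≠ a := (Finset.mem_erase.1 (Finset.mem_erase.1 hr).2).1
      rw [rotM_apply, if_neg hra, if_neg hrb]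
      by_cases hrq : r = q
      · subst hrq; simp [hra, hrb]
      · simp [hrq]
    rw [Finset.sum_congr rfl key, Finset.sum_ite_eq']
    by_cases hqa : q = a <;> by_cases hqb : q = b <;>
      simp [Finset.mem_erase, hqa, hqb]
  rw [hrest]
  clear hrest
  simp only [rotM_apply]
  by_cases hqa : q = a <;> by_cases hqb : q = b <;>
  first
    | exact absurd (hqa.symm.trans hqb) hab
    | (simp [hqa, hqb, hab, Ne.symm hab]; try ring)


section Moments

variable {d : ℕ} {μ : Measure (Matrix (Fin d) (Fin d) ℝ)}

lemma measurable_entry (i j : Fin d) :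
    Measurable fun W : Matrix (Fin d) (Fin d) ℝ => W i j :=
  (measurable_pi_apply j).comp (measurable_pi_apply i)

lemma measurable_mul_right (U : Matrix (Fin d) (Fin d) ℝ) :
    Measurable fun W : Matrix (Fin d) (Fin d) ℝ => W * U := by
  apply measurable_pi_lambda
  intro p
  apply measurable_pi_lambda
  intro q
  have h : (fun W : Matrix (Fin d) (Fin d) ℝ => (W * U) p q)
      = fun W => ∑ r, W p r * U r q := by
    funext W; rw [Matrix.mul_apply]
  rw [h]
  exact Finset.measurable_sum _ fun r _ => (measurable_entry p r).mul_const _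

lemma integral_rotinv (hμ : IsHaarOrthogonal μ) {U : Matrix (Fin d) (Fin d) ℝ}
    (hU : Uᵀ * U = 1) {f : Matrix (Fin d) (Fin d) ℝ → ℝ}
    (hf : AEStronglyMeasurable f μ) :
    ∫ W, f (W * U) ∂μ = ∫ W, f W ∂μ := by
  have hmap := (hμ.2.2 U hU).2
  conv_rhs => rw [← hmap]
  rw [integral_map (measurable_mul_right U).aemeasurable (by rwa [hmap])]

lemma ae_row_sq (hμ : IsHaarOrthogonal μ) :
    ∀ᵐ W ∂μ, ∀ p, ∑ a, (W p a) ^ 2 = 1 := by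
  filter_upwards [hμ.2.1] with W hW
  intro p
  have h2 : W * Wᵀ = 1 := mul_eq_one_comm.mp hW
  have h3 : (W * Wᵀ) p p = (1 : Matrix (Fin d) (Fin d) ℝ) p p := by rw [h2]
  rw [Matrix.mul_apply, Matrix.one_apply_eq] at h3
  rw [← h3]
  exact Finset.sum_congr rfl fun a _ => by rw [Matrix.transpose_apply, pow_two]

lemma ae_entry_bound (hμ : IsHaarOrthogonal μ) :
    ∀ᵐ W ∂μ, ∀ p q, |W p q| ≤ 1 := by
  filter_upwards [ae_row_sq hμ] with W hW
  intro p q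
  have h1 : (W p q)^2 ≤ 1 := by
    rw [← hW p]
    exact Finset.single_le_sum (fun a _ => sq_nonneg (W p a)) (Finset.mem_univ q)
  nlinarith [abs_nonneg (W p q), sq_abs (W p q)]

lemma integrable_mono4 (hμ : IsHaarOrthogonal μ) (i a b c e : Fin d) :
    Integrable (fun W => W i a * W i b * W i c * W i e) μ := by
  haveI := hμ.1
  refine (integrable_const (1:ℝ)).mono'
    ((((measurable_entry i a).mul (measurable_entry i b)).mul
      (measurable_entry i c)).mul (measurable_entry i e)).aestronglyMeasurable ?_
  filter_upwards [ae_entry_bound hμ] with W hW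
  have ha := hW i a; have hb := hW i b; have hc := hW i c; have he := hW i e
  rw [Real.norm_eq_abs, abs_mul, abs_mul, abs_mul]
  have h1 : |W i a| * |W i b| ≤ 1 := mul_le_one₀ ha (abs_nonneg _) hb
  have h2 : |W i a| * |W i b| * |W i c| ≤ 1 :=
    mul_le_one₀ h1 (abs_nonneg _) hc
  exact mul_le_one₀ h2 (abs_nonneg _) he

lemma integrable_mono2 (hμ : IsHaarOrthogonal μ) (i a b : Fin d) :
    Integrable (fun W => W i a * W i b) μ := by
  haveI := hμ.1
  refine (integrable_const (1:ℝ)).mono'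
    ((measurable_entry i a).mul (measurable_entry i b)).aestronglyMeasurable ?_
  filter_upwards [ae_entry_bound hμ] with W hW
  have ha := hW i a; have hb := hW i b
  rw [Real.norm_eq_abs, abs_mul]
  exact mul_le_one₀ ha (abs_nonneg _) hb

lemma flip_orth (x : Fin d) :
    (Matrix.diagonal (fun j => if j = x then (-1:ℝ) else 1))ᵀ *
      Matrix.diagonal (fun j => if j = x then (-1:ℝ) else 1) = 1 := by
  rw [Matrix.diagonal_transpose, Matrix.diagonal_mul_diagonal]
  have h : (fun j => ((if j = x then (-1:ℝ) else 1) * if j = x then (-1:ℝ) else 1))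
      = fun _ => (1:ℝ) := by
    funext j; by_cases hj : j = x <;> simp [hj]
  rw [h, Matrix.diagonal_one]

lemma int4_flip (hμ : IsHaarOrthogonal μ) (i a b c e x : Fin d)
    (hx : ((if a = x then (-1:ℝ) else 1) * (if b = x then (-1:ℝ) else 1) *
      (if c = x then (-1:ℝ) else 1) * (if e = x then (-1:ℝ) else 1)) = -1) :
    ∫ W, W i a * W i b * W i c * W i e ∂μ = 0 := by
  set q : Matrix (Fin d) (Fin d) ℝ → ℝ := fun W => W i a * W i b * W i c * W i e with hq
  have hmeas : AEStronglyMeasurable q μ :=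
    ((((measurable_entry i a).mul (measurable_entry i b)).mul
      (measurable_entry i c)).mul (measurable_entry i e)).aestronglyMeasurable
  have h1 := integral_rotinv hμ (flip_orth x) hmeas
  have h3 : ∫ W, q (W * Matrix.diagonal (fun j => if j = x then (-1:ℝ) else 1)) ∂μ
      = (∫ W, q W ∂μ) * (-1) := by
    rw [← integral_mul_const]
    refine integral_congr_ae (Filter.Eventually.of_forall fun W => ?_)
    simp only [hq, Matrix.mul_diagonal]
    linear_combination (W i a * W i b * W i c * W i e) * hx
  rw [h3] at h1
  linarith

lemma int2_flip (hμ : IsHaarOrthogonal μ) (i a b x : Fin d)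
    (hx : ((if a = x then (-1:ℝ) else 1) * (if b = x then (-1:ℝ) else 1)) = -1) :
    ∫ W, W i a * W i b ∂μ = 0 := by
  set q : Matrix (Fin d) (Fin d) ℝ → ℝ := fun W => W i a * W i b with hq
  have hmeas : AEStronglyMeasurable q μ :=
    ((measurable_entry i a).mul (measurable_entry i b)).aestronglyMeasurable
  have h1 := integral_rotinv hμ (flip_orth x) hmeas
  have h3 : ∫ W, q (W * Matrix.diagonal (fun j => if j = x then (-1:ℝ) else 1)) ∂μ
      = (∫ W, q W ∂μ) * (-1) := by
    rw [← integral_mul_const]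
    refine integral_congr_ae (Filter.Eventually.of_forall fun W => ?_)
    simp only [hq, Matrix.mul_diagonal]
    linear_combination (W i a * W i b) * hx
  rw [h3] at h1
  linarith

lemma int_rot (hμ : IsHaarOrthogonal μ) {a b : Fin d} (hab : a ≠ b) {c s : ℝ}
    (h : c ^ 2 + s ^ 2 = 1) {f : Matrix (Fin d) (Fin d) ℝ → ℝ}
    (hf : AEStronglyMeasurable f μ) :
    ∫ W, f (W * rotM a b c s) ∂μ = ∫ W, f W ∂μ :=
  integral_rotinv hμ (rotM_orth a b hab c s h) hf

lemma int_pow_eq (hμ : IsHaarOrthogonal μ) (i : Fin d) (n : ℕ) {a b : Fin d} (hab : a ≠ b) :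
    ∫ W, (W i a) ^ n ∂μ = ∫ W, (W i b) ^ n ∂μ := by
  have hmeas : AEStronglyMeasurable (fun W : Matrix (Fin d) (Fin d) ℝ => (W i b) ^ n) μ :=
    ((measurable_entry i b).pow_const n).aestronglyMeasurable
  have h1 := int_rot hμ hab (c := 0) (s := 1) (by norm_num) hmeas
  rw [← h1]
  refine integral_congr_ae (Filter.Eventually.of_forall fun W => ?_)
  show (W i a) ^ n = ((W * rotM a b 0 1) i b) ^ n
  rw [mul_rotM_apply _ _ _ hab, if_neg (Ne.symm hab), if_pos rfl]
  ring

lemma int2_val (hμ : IsHaarOrthogonal μ) (i a : Fin d) :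
    ∫ W, (W i a) ^ 2 ∂μ = ((d:ℝ))⁻¹ := by
  haveI := hμ.1
  have hint : ∀ b : Fin d, Integrable (fun W => (W i b)^2) μ := fun b => by
    have h := integrable_mono2 hμ i b b
    refine h.congr (Filter.Eventually.of_forall fun W => ?_)
    ring
  have hsum : ∫ W, (∑ b, (W i b)^2) ∂μ = 1 := by
    rw [integral_congr_ae ((ae_row_sq hμ).mono fun W hW => hW i)]
    simp
  rw [integral_finset_sum _ (fun b _ => hint b)] at hsum
  have heach : ∀ b : Fin d, ∫ W, (W i b)^2 ∂μ = ∫ W, (W i a)^2 ∂μ := by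
    intro b
    rcases eq_or_ne b a with rfl | h
    · rfl
    · exact int_pow_eq hμ i 2 h
  rw [Finset.sum_congr rfl (fun b _ => heach b), Finset.sum_const, Finset.card_univ,
    Fintype.card_fin, nsmul_eq_mul] at hsum
  have hd0 : (0:ℝ) < d := by exact_mod_cast i.pos
  field_simp at hsum ⊢
  linarith

lemma int2_formula (hμ : IsHaarOrthogonal μ) (i a b : Fin d) :
    ∫ W, W i a * W i b ∂μ = if a = b then ((d:ℝ))⁻¹ else 0 := by
  rcases eq_or_ne a b with rfl | hab
  · rw [if_pos rfl, ← int2_val hμ i a]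
    exact integral_congr_ae (Filter.Eventually.of_forall fun W => by ring)
  · rw [if_neg hab]
    exact int2_flip hμ i a b b (by simp [hab])

lemma int22_comm (hμ : IsHaarOrthogonal μ) (i a b : Fin d) :
    ∫ W, (W i a)^2 * (W i b)^2 ∂μ = ∫ W, (W i b)^2 * (W i a)^2 ∂μ :=
  integral_congr_ae (Filter.Eventually.of_forall fun W => by ring)

lemma int22_move2 (hμ : IsHaarOrthogonal μ) (i : Fin d) {a b b' : Fin d}
    (hab : a ≠ b) (hab' : a ≠ b') :
    ∫ W, (W i a)^2 * (W i b)^2 ∂μ = ∫ W, (W i a)^2 * (W i b')^2 ∂μ := by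
  rcases eq_or_ne b b' with rfl | hbb'
  · rfl
  have hmeas : AEStronglyMeasurable (fun W : Matrix (Fin d) (Fin d) ℝ =>
      (W i a)^2 * (W i b)^2) μ :=
    (((measurable_entry i a).pow_const 2).mul ((measurable_entry i b).pow_const 2)).aestronglyMeasurable
  have h1 := int_rot hμ hbb' (c := 0) (s := 1) (by norm_num) hmeas
  rw [← h1]
  refine integral_congr_ae (Filter.Eventually.of_forall fun W => ?_)
  show ((W * rotM b b' 0 1) i a)^2 * ((W * rotM b b' 0 1) i b)^2 = (W i a)^2 * (W i b')^2
  rw [mul_rotM_apply _ _ _ hbb', mul_rotM_apply _ _ _ hbb',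
    if_neg hab, if_neg hab', if_pos rfl]
  ring

lemma int22_move1 (hμ : IsHaarOrthogonal μ) (i : Fin d) {a a' b : Fin d}
    (hab : a ≠ b) (ha'b : a' ≠ b) :
    ∫ W, (W i a)^2 * (W i b)^2 ∂μ = ∫ W, (W i a')^2 * (W i b)^2 ∂μ := by
  rw [int22_comm hμ i a b, int22_comm hμ i a' b]
  exact int22_move2 hμ i (Ne.symm hab) (Ne.symm ha'b)

lemma int22_eq (hμ : IsHaarOrthogonal μ) (i : Fin d) {a b a' b' : Fin d}
    (hab : a ≠ b) (ha'b' : a' ≠ b') :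
    ∫ W, (W i a)^2 * (W i b)^2 ∂μ = ∫ W, (W i a')^2 * (W i b')^2 ∂μ := by
  rcases eq_or_ne a' b with h | h
  · subst h
    rcases eq_or_ne a b' with h2 | h2
    · subst h2
      exact int22_comm hμ i a a'
    · rw [int22_move1 hμ i hab (Ne.symm ha'b')]
      exact int22_comm hμ i b' a'
  · rw [int22_move1 hμ i hab h]
    exact int22_move2 hμ i h ha'b'

lemma int4_eq_3 (hμ : IsHaarOrthogonal μ) (i : Fin d) {a b : Fin d} (hab : a ≠ b) :
    ∫ W, (W i a)^4 ∂μ = 3 * ∫ W, (W i a)^2 * (W i b)^2 ∂μ := by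
  set cc : ℝ := Real.sqrt 2⁻¹ with hccdef
  have hcc : cc ^ 2 = 2⁻¹ := Real.sq_sqrt (by norm_num)
  have horth : cc ^ 2 + cc ^ 2 = 1 := by rw [hcc]; norm_num
  have hmeas : AEStronglyMeasurable (fun W : Matrix (Fin d) (Fin d) ℝ => (W i a) ^ 4) μ :=
    ((measurable_entry i a).pow_const 4).aestronglyMeasurable
  have h1 := int_rot hμ hab horth hmeas
  -- pointwise : ((W * R) i a)^4 = (1/4) * (W i a - W i b)^4
  have h2 : ∫ W, ((W * rotM a b cc cc) i a) ^ 4 ∂μ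
      = ∫ W, (1/4 : ℝ) * (W i a - W i b)^4 ∂μ := by
    refine integral_congr_ae (Filter.Eventually.of_forall fun W => ?_)
    show ((W * rotM a b cc cc) i a) ^ 4 = (1/4 : ℝ) * (W i a - W i b)^4
    rw [mul_rotM_apply _ _ _ hab, if_pos rfl]
    have h4 : (cc * W i a - cc * W i b)^4 = (cc^2)^2 * (W i a - W i b)^4 := by ring
    rw [h4, hcc]; norm_num
  rw [h2] at h1
  -- expand the quartic
  have hI1 := integrable_mono4 hμ i a a a a
  have hI2 := integrable_mono4 hμ i a a a b
  have hI3 := integrable_mono4 hμ i a a b b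
  have hI4 := integrable_mono4 hμ i a b b b
  have hI5 := integrable_mono4 hμ i b b b b
  have hexp : ∫ W, (1/4 : ℝ) * (W i a - W i b)^4 ∂μ
      = (1/4) * (∫ W, W i a * W i a * W i a * W i a ∂μ)
        + (-1) * (∫ W, W i a * W i a * W i a * W i b ∂μ)
        + (3/2) * (∫ W, W i a * W i a * W i b * W i b ∂μ)
        + (-1) * (∫ W, W i a * W i b * W i b * W i b ∂μ)
        + (1/4) * (∫ W, W i b * W i b * W i b * W i b ∂μ) := by
    have hstep : ∫ W, (1/4 : ℝ) * (W i a - W i b)^4 ∂μ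
        = ∫ W, ((1/4) * (W i a * W i a * W i a * W i a)
          + ((-1) * (W i a * W i a * W i a * W i b)
          + ((3/2) * (W i a * W i a * W i b * W i b)
          + ((-1) * (W i a * W i b * W i b * W i b)
          + (1/4) * (W i b * W i b * W i b * W i b))))) ∂μ := by
      refine integral_congr_ae (Filter.Eventually.of_forall fun W => ?_)
      show (1/4 : ℝ) * (W i a - W i b)^4 = _
      ring
    have I1' : Integrable (fun W => (1/4:ℝ) * (W i a * W i a * W i a * W i a)) μ :=
      hI1.const_mul _
    have I2' : Integrable (fun W => (-1:ℝ) * (W i a * W i a * W i a * W i b)) μ :=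
      hI2.const_mul _
    have I3' : Integrable (fun W => (3/2:ℝ) * (W i a * W i a * W i b * W i b)) μ :=
      hI3.const_mul _
    have I4' : Integrable (fun W => (-1:ℝ) * (W i a * W i b * W i b * W i b)) μ :=
      hI4.const_mul _
    have I5' : Integrable (fun W => (1/4:ℝ) * (W i b * W i b * W i b * W i b)) μ :=
      hI5.const_mul _
    have I45 : Integrable (fun W => (-1:ℝ) * (W i a * W i b * W i b * W i b)
        + (1/4:ℝ) * (W i b * W i b * W i b * W i b)) μ := I4'.add I5'
    have I345 : Integrable (fun W => (3/2:ℝ) * (W i a * W i a * W i b * W i b)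
        + ((-1:ℝ) * (W i a * W i b * W i b * W i b)
        + (1/4:ℝ) * (W i b * W i b * W i b * W i b))) μ := I3'.add I45
    have I2345 : Integrable (fun W => (-1:ℝ) * (W i a * W i a * W i a * W i b)
        + ((3/2:ℝ) * (W i a * W i a * W i b * W i b)
        + ((-1:ℝ) * (W i a * W i b * W i b * W i b)
        + (1/4:ℝ) * (W i b * W i b * W i b * W i b)))) μ := I2'.add I345
    rw [hstep, integral_add I1' I2345, integral_add I2' I345, integral_add I3' I45,
      integral_add I4' I5', integral_const_mul, integral_const_mul, integral_const_mul,
      integral_const_mul, integral_const_mul]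
    ring
  rw [hexp] at h1
  have hz1 : ∫ W, W i a * W i a * W i a * W i b ∂μ = 0 :=
    int4_flip hμ i a a a b b (by simp [hab])
  have hz2 : ∫ W, W i a * W i b * W i b * W i b ∂μ = 0 :=
    int4_flip hμ i a b b b a (by simp [Ne.symm hab])
  have he1 : ∫ W, W i a * W i a * W i a * W i a ∂μ = ∫ W, (W i a)^4 ∂μ :=
    integral_congr_ae (Filter.Eventually.of_forall fun W => by ring)
  have he2 : ∫ W, W i b * W i b * W i b * W i b ∂μ = ∫ W, (W i a)^4 ∂μ := by
    have hb4 : ∫ W, W i b * W i b * W i b * W i b ∂μ = ∫ W, (W i b)^4 ∂μ :=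
      integral_congr_ae (Filter.Eventually.of_forall fun W => by ring)
    rw [hb4]
    exact (int_pow_eq hμ i 4 hab).symm
  have he3 : ∫ W, W i a * W i a * W i b * W i b ∂μ = ∫ W, (W i a)^2 * (W i b)^2 ∂μ :=
    integral_congr_ae (Filter.Eventually.of_forall fun W => by ring)
  rw [hz1, hz2, he1, he2, he3] at h1
  linarith

lemma int22_val (hμ : IsHaarOrthogonal μ) (i : Fin d) {a b : Fin d} (hab : a ≠ b) :
    ∫ W, (W i a)^2 * (W i b)^2 ∂μ = ((d:ℝ) * (d + 2))⁻¹ := by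
  haveI := hμ.1
  have hint2 : ∀ b' : Fin d, Integrable (fun W => (W i a)^2 * (W i b')^2) μ := fun b' => by
    refine (integrable_mono4 hμ i a a b' b').congr (Filter.Eventually.of_forall fun W => ?_)
    ring
  -- ∫ (W i a)^2 = ∑_{b'} ∫ (W i a)^2 (W i b')^2
  have hsum : ∫ W, (∑ b', (W i a)^2 * (W i b')^2) ∂μ = ((d:ℝ))⁻¹ := by
    rw [← int2_val hμ i a]
    refine integral_congr_ae ((ae_row_sq hμ).mono fun W hW => ?_)
    show (∑ b', (W i a)^2 * (W i b')^2) = (W i a)^2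
    rw [← Finset.mul_sum, hW i, mul_one]
  rw [integral_finset_sum _ (fun b' _ => hint2 b')] at hsum
  set J : ℝ := ∫ W, (W i a)^2 * (W i b)^2 ∂μ with hJ
  have heach : ∀ b' : Fin d, ∫ W, (W i a)^2 * (W i b')^2 ∂μ
      = if b' = a then 3 * J else J := by
    intro b'
    rcases eq_or_ne b' a with rfl | h
    · rw [if_pos rfl]
      have := int4_eq_3 hμ i hab
      rw [hJ, ← this]
      exact integral_congr_ae (Filter.Eventually.of_forall fun W => by ring)
    · rw [if_neg h]
      exact int22_eq hμ i (Ne.symm h) hab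
  rw [Finset.sum_congr rfl (fun b' _ => heach b')] at hsum
  have hsplit2 : ∀ b' : Fin d, (if b' = a then 3 * J else J) = J + (if b' = a then 2 * J else 0) := by
    intro b'; split_ifs <;> ring
  rw [Finset.sum_congr rfl (fun b' _ => hsplit2 b'), Finset.sum_add_distrib,
    Finset.sum_const, Finset.sum_ite_eq', Finset.card_univ, Fintype.card_fin,
    if_pos (Finset.mem_univ a), nsmul_eq_mul] at hsum
  have hd0 : (0:ℝ) < d := by
    exact_mod_cast i.pos
  have hdne : (d:ℝ) ≠ 0 := ne_of_gt hd0
  have hd2ne : ((d:ℝ) + 2) ≠ 0 := by positivity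
  have h2 : ((d:ℝ) + 2) * J = (d:ℝ)⁻¹ := by linarith
  field_simp at h2 ⊢
  linear_combination h2

lemma int4_val (hμ : IsHaarOrthogonal μ) (hd : 2 ≤ d) (i a : Fin d) :
    ∫ W, (W i a)^4 ∂μ = 3 * ((d:ℝ) * (d + 2))⁻¹ := by
  obtain ⟨b, hb⟩ := Fintype.exists_ne_of_one_lt_card (by simp; omega) a
  rw [int4_eq_3 hμ i (Ne.symm hb), int22_val hμ i (Ne.symm hb)]

lemma int4_formula (hμ : IsHaarOrthogonal μ) (hd : 2 ≤ d) (i a b c e : Fin d) :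
    ∫ W, W i a * W i b * W i c * W i e ∂μ =
      ((d:ℝ) * (d + 2))⁻¹ *
        (((if a = b ∧ c = e then 1 else 0) + (if a = c ∧ b = e then 1 else 0)
          + (if a = e ∧ b = c then 1 else 0) : ℝ)) := by
  by_cases hab : a = b
  · subst hab
    by_cases hce : c = e
    · subst hce
      by_cases hac : a = c
      · subst hac
        have h1 : ∫ W, W i a * W i a * W i a * W i a ∂μ = ∫ W, (W i a)^4 ∂μ :=
          integral_congr_ae (Filter.Eventually.of_forall fun W => by ring)
        rw [h1, int4_val hμ hd i a]
        norm_num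
        try ring
      · have h1 : ∫ W, W i a * W i a * W i c * W i c ∂μ
            = ∫ W, (W i a)^2 * (W i c)^2 ∂μ :=
          integral_congr_ae (Filter.Eventually.of_forall fun W => by ring)
        rw [h1, int22_val hμ i hac]
        simp [hac]
    · -- a = b, c ≠ e : zero
      have hz : ∫ W, W i a * W i a * W i c * W i e ∂μ = 0 := by
        by_cases hca : c = a
        · subst hca
          have hea : ¬ e = c := fun h => hce h.symm
          exact int4_flip hμ i c c c e e (by simp [hce, hea])
        · have hac' : ¬ a = c := fun h => hca h.symm
          have hec : ¬ e = c := fun h => hce h.symm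
          exact int4_flip hμ i a a c e c (by simp [hac', hec])
      rw [hz]
      have h2 : ¬(a = c ∧ a = e) := fun h => hce (h.1.symm.trans h.2)
      have h3 : ¬(a = e ∧ a = c) := fun h => hce (h.2.symm.trans h.1)
      simp [hce, h2, h3]
  · by_cases hce : c = e
    · subst hce
      -- a ≠ b, pattern (a, b, c, c) : zero
      have hz : ∫ W, W i a * W i b * W i c * W i c ∂μ = 0 := by
        by_cases hac : a = c
        · subst hac
          have hba : ¬ b = a := fun h => hab h.symm
          exact int4_flip hμ i a b a a b (by simp [hab])
        · have hba : ¬ b = a := fun h => hab h.symm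
          have hca : ¬ c = a := fun h => hac h.symm
          exact int4_flip hμ i a b c c a (by simp [hba, hca])
      rw [hz]
      have h2 : ¬(a = c ∧ b = c) := fun ⟨h1, h2⟩ => hab (h1.trans h2.symm)
      simp [hab, h2]
    · -- a ≠ b, c ≠ e
      by_cases hac : a = c
      · subst hac
        by_cases hbe : b = e
        · subst hbe
          have h1 : ∫ W, W i a * W i b * W i a * W i b ∂μ
              = ∫ W, (W i a)^2 * (W i b)^2 ∂μ :=
            integral_congr_ae (Filter.Eventually.of_forall fun W => by ring)
          rw [h1, int22_val hμ i hab]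
          simp [hab]
        · have heb : ¬ e = b := fun h => hbe h.symm
          have hz : ∫ W, W i a * W i b * W i a * W i e ∂μ = 0 :=
            int4_flip hμ i a b a e b (by simp [hab, heb])
          rw [hz]
          have h2 : ¬(a = e ∧ b = a) := fun ⟨h1, h2⟩ => hab h2.symm
          simp [hab, hbe, h2]
      · by_cases hae : a = e
        · subst hae
          by_cases hbc : b = c
          · subst hbc
            have h1 : ∫ W, W i a * W i b * W i b * W i a ∂μ
                = ∫ W, (W i a)^2 * (W i b)^2 ∂μ :=
              integral_congr_ae (Filter.Eventually.of_forall fun W => by ring)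
            rw [h1, int22_val hμ i hab]
            simp [hab, hac]
          · have hcb : ¬ c = b := fun h => hbc h.symm
            have hz : ∫ W, W i a * W i b * W i c * W i a ∂μ = 0 :=
              int4_flip hμ i a b c a b (by simp [hab, hcb])
            rw [hz]
            simp [hab, hac, hbc]
        · have hba : ¬ b = a := fun h => hab h.symm
          have hca : ¬ c = a := fun h => hac h.symm
          have hea : ¬ e = a := fun h => hae h.symm
          have hz : ∫ W, W i a * W i b * W i c * W i e ∂μ = 0 :=
            int4_flip hμ i a b c e a (by simp [hba, hca, hea])
          rw [hz]
          simp [hab, hac, hae]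

lemma sq_double_sum (t : Fin d → Fin d → ℝ) :
    (∑ a, ∑ b, t a b)^2 = ∑ a, ∑ b, ∑ c, ∑ e, t a b * t c e := by
  calc (∑ a, ∑ b, t a b)^2 = ∑ a, ∑ c, ((∑ b, t a b) * (∑ e, t c e)) := by
        rw [pow_two, Finset.sum_mul_sum]
    _ = ∑ a, ∑ c, ∑ b, ∑ e, t a b * t c e := by
        refine Finset.sum_congr rfl fun a _ => Finset.sum_congr rfl fun c _ => ?_
        rw [Finset.sum_mul_sum]
    _ = ∑ a, ∑ b, ∑ c, ∑ e, t a b * t c e :=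
        Finset.sum_congr rfl fun a _ => Finset.sum_comm

lemma integrable_quad (hμ : IsHaarOrthogonal μ) (i : Fin d) (A : Matrix (Fin d) (Fin d) ℝ) :
    Integrable (fun W => ∑ a, ∑ b, W i a * W i b * A a b) μ := by
  refine integrable_finset_sum _ fun a _ => integrable_finset_sum _ fun b _ => ?_
  exact (integrable_mono2 hμ i a b).mul_const _

lemma intQuad (hμ : IsHaarOrthogonal μ) (i : Fin d) (A : Matrix (Fin d) (Fin d) ℝ)
    (hAd : ∀ a, A a a = 1) :
    ∫ W, (∑ a, ∑ b, W i a * W i b * A a b) ∂μ = 1 := by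
  rw [integral_finset_sum _ fun a _ => integrable_finset_sum _ fun b _ =>
    ((integrable_mono2 hμ i a b).mul_const (A a b) :
      Integrable (fun W => W i a * W i b * A a b) μ)]
  have h1 : ∀ a : Fin d, ∫ W, (∑ b, W i a * W i b * A a b) ∂μ = (d:ℝ)⁻¹ := by
    intro a
    rw [integral_finset_sum _ fun b _ => ((integrable_mono2 hμ i a b).mul_const (A a b) :
      Integrable (fun W => W i a * W i b * A a b) μ)]
    have h2 : ∀ b : Fin d, ∫ W, W i a * W i b * A a b ∂μ
        = (if a = b then (d:ℝ)⁻¹ else 0) * A a b := by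
      intro b
      rw [← int2_formula hμ i a b, ← integral_mul_const]
    rw [Finset.sum_congr rfl fun b _ => h2 b]
    have h3 : ∀ b : Fin d, (if a = b then (d:ℝ)⁻¹ else 0) * A a b
        = if a = b then (d:ℝ)⁻¹ * A a b else 0 := fun b => by split_ifs <;> ring
    rw [Finset.sum_congr rfl fun b _ => h3 b, Finset.sum_ite_eq, if_pos (Finset.mem_univ a),
      hAd a, mul_one]
  rw [Finset.sum_congr rfl fun a _ => h1 a, Finset.sum_const, Finset.card_univ,
    Fintype.card_fin, nsmul_eq_mul]
  have hd0 : (0:ℝ) < d := by exact_mod_cast i.pos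
  field_simp

lemma intQuadSq (hμ : IsHaarOrthogonal μ) (hd : 2 ≤ d) (i : Fin d)
    (A : Matrix (Fin d) (Fin d) ℝ) (hAs : ∀ p q, A p q = A q p) :
    ∫ W, (∑ a, ∑ b, W i a * W i b * A a b)^2 ∂μ
      = ((d:ℝ) * (d + 2))⁻¹ * ((∑ a, A a a)^2 + 2 * ∑ a, ∑ b, (A a b)^2) := by
  have hint4 : ∀ (a b c e : Fin d), Integrable
      (fun W => (W i a * W i b * A a b) * (W i c * W i e * A c e)) μ := by
    intro a b c e
    refine ((integrable_mono4 hμ i a b c e).mul_const (A a b * A c e)).congr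
      (Filter.Eventually.of_forall fun W => ?_)
    ring
  have hptwise : ∫ W, (∑ a, ∑ b, W i a * W i b * A a b)^2 ∂μ
      = ∫ W, (∑ a, ∑ b, ∑ c, ∑ e, (W i a * W i b * A a b) * (W i c * W i e * A c e)) ∂μ := by
    refine integral_congr_ae (Filter.Eventually.of_forall fun W => ?_)
    exact sq_double_sum _
  rw [hptwise]
  rw [integral_finset_sum _ fun a _ => integrable_finset_sum _ fun b _ =>
      integrable_finset_sum _ fun c _ => integrable_finset_sum _ fun e _ => hint4 a b c e]
  have h1 : ∀ a : Fin d, (∫ W, (∑ b, ∑ c, ∑ e,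
        (W i a * W i b * A a b) * (W i c * W i e * A c e)) ∂μ)
      = ∑ b, ∑ c, ∑ e, ((d:ℝ) * (d + 2))⁻¹ *
          (((if a = b ∧ c = e then 1 else 0) + (if a = c ∧ b = e then 1 else 0)
            + (if a = e ∧ b = c then 1 else 0) : ℝ)) * (A a b * A c e) := by
    intro a
    rw [integral_finset_sum _ fun b _ => integrable_finset_sum _ fun c _ =>
      integrable_finset_sum _ fun e _ => hint4 a b c e]
    refine Finset.sum_congr rfl fun b _ => ?_
    rw [integral_finset_sum _ fun c _ => integrable_finset_sum _ fun e _ => hint4 a b c e]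
    refine Finset.sum_congr rfl fun c _ => ?_
    rw [integral_finset_sum _ fun e _ => hint4 a b c e]
    refine Finset.sum_congr rfl fun e _ => ?_
    have h2 : ∫ W, (W i a * W i b * A a b) * (W i c * W i e * A c e) ∂μ
        = (∫ W, W i a * W i b * W i c * W i e ∂μ) * (A a b * A c e) := by
      rw [← integral_mul_const]
      exact integral_congr_ae (Filter.Eventually.of_forall fun W => by ring)
    rw [h2, int4_formula hμ hd i a b c e]
  rw [Finset.sum_congr rfl fun a _ => h1 a]
  -- now pure algebraic sum evaluation
  set κ : ℝ := ((d:ℝ) * (d + 2))⁻¹ with hκ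
  have hsplit : ∀ (a b c e : Fin d), κ *
        (((if a = b ∧ c = e then 1 else 0) + (if a = c ∧ b = e then 1 else 0)
          + (if a = e ∧ b = c then 1 else 0) : ℝ)) * (A a b * A c e)
      = κ * ((if a = b ∧ c = e then (1:ℝ) else 0) * (A a b * A c e))
        + κ * ((if a = c ∧ b = e then (1:ℝ) else 0) * (A a b * A c e))
        + κ * ((if a = e ∧ b = c then (1:ℝ) else 0) * (A a b * A c e)) := by
    intro a b c e; ring
  simp_rw [hsplit, Finset.sum_add_distrib, ← Finset.mul_sum]
  have e1 : ∑ a, ∑ b, ∑ c, ∑ e, (if a = b ∧ c = e then (1:ℝ) else 0) * (A a b * A c e)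
      = (∑ a, A a a)^2 := by
    simp only [ite_and, ite_mul, one_mul, zero_mul, Finset.sum_ite_irrel,
      Finset.sum_const_zero, Finset.sum_ite_eq, Finset.mem_univ, if_true]
    rw [pow_two, Finset.sum_mul_sum]
  have e2 : ∑ a, ∑ b, ∑ c, ∑ e, (if a = c ∧ b = e then (1:ℝ) else 0) * (A a b * A c e)
      = ∑ a, ∑ b, (A a b)^2 := by
    simp only [ite_and, ite_mul, one_mul, zero_mul, Finset.sum_ite_irrel,
      Finset.sum_const_zero, Finset.sum_ite_eq, Finset.mem_univ, if_true]
    simp [pow_two]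
  have e3 : ∑ a, ∑ b, ∑ c, ∑ e, (if a = e ∧ b = c then (1:ℝ) else 0) * (A a b * A c e)
      = ∑ a, ∑ b, (A a b)^2 := by
    simp only [ite_and, ite_mul, one_mul, zero_mul, Finset.sum_ite_irrel,
      Finset.sum_const_zero, Finset.sum_ite_eq, Finset.mem_univ, if_true]
    refine Finset.sum_congr rfl fun a _ => Finset.sum_congr rfl fun b _ => ?_
    rw [hAs a b]; ring
  rw [e1, e2, e3]
  ring

end Moments

section Helpers

lemma one_sub_inv_le_log {y : ℝ} (hy : 0 < y) : 1 - y⁻¹ ≤ Real.log y := by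
  have h := Real.log_le_sub_one_of_pos (inv_pos.2 hy)
  rw [Real.log_inv] at h
  linarith

lemma log_le_quad {M t : ℝ} (hM : 2 ≤ M) (ht : 0 < t) (htM : t ≤ M) :
    Real.log t ≤ (t - 1) - (t - 1)^2 / (3 * M) := by
  set u : ℝ := Real.sqrt t with hu
  set m : ℝ := Real.sqrt M with hm
  have hM0 : (0:ℝ) ≤ M := by linarith
  have hu2 : u ^ 2 = t := Real.sq_sqrt ht.le
  have hm2 : m ^ 2 = M := Real.sq_sqrt hM0
  have hu0 : 0 < u := Real.sqrt_pos.2 ht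
  have hm0 : 0 ≤ m := Real.sqrt_nonneg M
  have hum : u ≤ m := Real.sqrt_le_sqrt htM
  have hlog : Real.log t = 2 * Real.log u := by
    rw [hu, Real.log_sqrt ht.le]; ring
  have h1 : Real.log u ≤ u - 1 := Real.log_le_sub_one_of_pos hu0
  -- (u+1)^2 ≤ 3M
  have h2 : (u + 1)^2 ≤ 3 * M := by nlinarith [sq_nonneg (m - 1)]
  have h3 : (t - 1)^2 / (3 * M) ≤ (u - 1)^2 := by
    rw [div_le_iff₀ (by linarith : (0:ℝ) < 3 * M)]
    have h4 : (t - 1)^2 = (u - 1)^2 * (u + 1)^2 := by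
      rw [← hu2]; ring
    rw [h4]
    exact mul_le_mul_of_nonneg_left h2 (sq_nonneg _)
  nlinarith [h3]

lemma trace_transpose_mul (M : Matrix (Fin d) (Fin d) ℝ) :
    (Mᵀ * M).trace = ∑ i, ∑ j, (M i j)^2 := by
  rw [Matrix.trace]
  have h : ∀ j, (Mᵀ * M).diag j = ∑ i, (M i j)^2 := by
    intro j
    rw [Matrix.diag_apply, Matrix.mul_apply]
    exact Finset.sum_congr rfl fun i _ => by rw [Matrix.transpose_apply, pow_two]
  rw [Finset.sum_congr rfl fun j _ => h j]
  exact Finset.sum_comm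

lemma isoGap_formula {d : ℕ} (hd : 0 < d) (M : Matrix (Fin d) (Fin d) ℝ)
    (hdet : M.det ≠ 0) (htr : (Mᵀ * M).trace = (d:ℝ)) :
    isoGap M = -(1/(d:ℝ)) * Real.log (M.det ^ 2) := by
  unfold isoGap
  rw [htr]
  have hd0 : ((d:ℝ)) ≠ 0 := by exact_mod_cast hd.ne'
  have h1 : (1/(d:ℝ)) * d = 1 := by field_simp
  rw [h1, div_one]
  have hdet2 : (Mᵀ * M).det = M.det ^ 2 := by
    rw [Matrix.det_mul, Matrix.det_transpose]; ring
  rw [hdet2, Real.log_rpow (pow_two_pos_of_ne_zero hdet)]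
  ring

lemma trace_eq_sum_eigen {A : Matrix (Fin d) (Fin d) ℝ} (hA : A.IsHermitian) :
    A.trace = ∑ k, hA.eigenvalues k := by
  set U : Matrix (Fin d) (Fin d) ℝ := (hA.eigenvectorUnitary : Matrix (Fin d) (Fin d) ℝ)
    with hU
  have hUU : U * star U = 1 := Matrix.mem_unitaryGroup_iff.mp hA.eigenvectorUnitary.2
  have hUU' : star U * U = 1 := mul_eq_one_comm.mp hUU
  conv_lhs => rw [hA.spectral_theorem, Unitary.conjStarAlgAut_apply]
  rw [Matrix.trace_mul_comm, ← Matrix.mul_assoc, hUU', Matrix.one_mul, Matrix.trace_diagonal]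
  simp

lemma trace_sq_eq_sum_eigen_sq {A : Matrix (Fin d) (Fin d) ℝ} (hA : A.IsHermitian) :
    (A * A).trace = ∑ k, (hA.eigenvalues k)^2 := by
  set U : Matrix (Fin d) (Fin d) ℝ := (hA.eigenvectorUnitary : Matrix (Fin d) (Fin d) ℝ)
    with hU
  set D : Matrix (Fin d) (Fin d) ℝ :=
    Matrix.diagonal (RCLike.ofReal ∘ hA.eigenvalues) with hD
  have hUU : U * star U = 1 := Matrix.mem_unitaryGroup_iff.mp hA.eigenvectorUnitary.2
  have hUU' : star U * U = 1 := mul_eq_one_comm.mp hUU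
  have hspec : A = U * D * star U := by rw [hA.spectral_theorem, Unitary.conjStarAlgAut_apply]
  have hAA : A * A = U * (D * D) * star U := by
    rw [hspec]
    simp only [Matrix.mul_assoc]
    rw [← Matrix.mul_assoc (star U) U (D * star U), hUU', Matrix.one_mul]
  rw [hAA, Matrix.trace_mul_comm, ← Matrix.mul_assoc, hUU', Matrix.one_mul,
    Matrix.diagonal_mul_diagonal, Matrix.trace_diagonal]
  refine Finset.sum_congr rfl fun k _ => ?_
  simp [pow_two]

end Helpers

end HaarBN

open HaarBN in
/-- for nonsingular `X` with unit-norm rows, eigenvalues `λ` of `XXᵀ`,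
and `W` Haar-distributed on `O(d)`,
`E[φ(BN(WX))] ≤ φ(X) + log(1 − Σ_k (λ_k − 1)²/(2d²(d+2)))`, and the logarithmic
term is nonpositive. -/
theorem expected_isoGap_BN_haar_le {d : ℕ} (hd : 2 ≤ d)
    (X : Matrix (Fin d) (Fin d) ℝ) (hX : X.det ≠ 0)
    (hrows : ∀ i, ∑ j, X i j ^ 2 = 1)
    (hsym : (X * Xᵀ).IsHermitian)
    (μ : Measure (Matrix (Fin d) (Fin d) ℝ)) (hμ : IsHaarOrthogonal μ) :
    (∫ W, isoGap (BN (W * X)) ∂μ) ≤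
        isoGap X +
          Real.log (1 - (∑ k, (hsym.eigenvalues k - 1) ^ 2) / (2 * (d : ℝ) ^ 2 * (d + 2))) ∧
      Real.log (1 - (∑ k, (hsym.eigenvalues k - 1) ^ 2) / (2 * (d : ℝ) ^ 2 * (d + 2))) ≤ 0 := by
  classical
  haveI := hμ.1
  have hdnat0 : 0 < d := by omega
  have hd0 : (0:ℝ) < d := by exact_mod_cast hdnat0
  have hd2R : (2:ℝ) ≤ d := by exact_mod_cast hd
  -- the Gram matrix
  set A : Matrix (Fin d) (Fin d) ℝ := X * Xᵀ with hAdef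
  have hAsym : Aᵀ = A := by
    have h := hsym
    rwa [Matrix.IsHermitian, Matrix.conjTranspose_eq_transpose_of_trivial] at h
  have hAs : ∀ p q, A p q = A q p := fun p q => by
    conv_lhs => rw [← hAsym]
    rfl
  have hAentry : ∀ a b, A a b = ∑ j, X a j * X b j := fun a b => by
    rw [hAdef, Matrix.mul_apply]
    exact Finset.sum_congr rfl fun j _ => by rw [Matrix.transpose_apply]
  have hAd : ∀ a, A a a = 1 := fun a => by
    rw [hAentry a a, ← hrows a]
    exact Finset.sum_congr rfl fun j _ => (pow_two (X a j)).symm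
  -- eigenvalues
  set lam : Fin d → ℝ := hsym.eigenvalues with hlam
  have htrA : A.trace = (d:ℝ) := by
    rw [Matrix.trace]
    rw [Finset.sum_congr rfl fun a _ => (show A.diag a = 1 from hAd a)]
    simp
  have hsum_lam : ∑ k, lam k = (d:ℝ) := by rw [hlam, ← trace_eq_sum_eigen hsym, htrA]
  set S : ℝ := ∑ a, ∑ b, (A a b)^2 with hSdef
  have hsum_lam_sq : ∑ k, (lam k)^2 = S := by
    rw [hlam, ← trace_sq_eq_sum_eigen_sq hsym, hSdef]
    rw [Matrix.trace]
    have h : ∀ a, (A*A).diag a = ∑ b, (A a b)^2 := fun a => by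
      rw [Matrix.diag_apply, Matrix.mul_apply]
      refine Finset.sum_congr rfl fun b _ => ?_
      rw [hAs b a, pow_two]
    rw [Finset.sum_congr rfl fun a _ => h a]
  have hlam0 : ∀ k, 0 ≤ lam k := by
    intro k
    have hps : (X * Xᴴ).PosSemidef := Matrix.posSemidef_self_mul_conjTranspose X
    rw [Matrix.conjTranspose_eq_transpose_of_trivial] at hps
    exact hps.eigenvalues_nonneg k
  set s : ℝ := ∑ k, (lam k - 1)^2 with hsdef
  have hs_eq : s = S - d := by
    have h1 : s = ∑ k, ((lam k)^2 - 2 * lam k + 1) :=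
      Finset.sum_congr rfl fun k _ => by ring
    rw [h1, Finset.sum_add_distrib, Finset.sum_sub_distrib, hsum_lam_sq, ← Finset.mul_sum,
      hsum_lam]
    simp
    ring
  have hs0 : 0 ≤ s := Finset.sum_nonneg fun k _ => sq_nonneg _
  have hlam_le : ∀ k, lam k ≤ (d:ℝ) := fun k => by
    rw [← hsum_lam]
    exact Finset.single_le_sum (fun j _ => hlam0 j) (Finset.mem_univ k)
  have hS_le : S ≤ (d:ℝ)^2 := by
    rw [← hsum_lam_sq]
    calc ∑ k, (lam k)^2 ≤ ∑ k, lam k * d :=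
          Finset.sum_le_sum fun k _ => by nlinarith [hlam0 k, hlam_le k]
      _ = (d:ℝ)^2 := by rw [← Finset.sum_mul, hsum_lam]; ring
  have hs_le : s ≤ (d:ℝ)^2 - d := by rw [hs_eq]; linarith
  -- the row-norm-square functions
  set t : Fin d → Matrix (Fin d) (Fin d) ℝ → ℝ :=
    fun i W => ∑ j, ((W * X) i j)^2 with htdef
  have texpand : ∀ i W, t i W = ∑ a, ∑ b, W i a * W i b * A a b := by
    intro i W
    show (∑ j, ((W * X) i j)^2) = _
    calc ∑ j, ((W*X) i j)^2
        = ∑ j, ((∑ a, W i a * X a j) * (∑ b, W i b * X b j)) := by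
          refine Finset.sum_congr rfl fun j _ => ?_
          rw [Matrix.mul_apply, pow_two]
      _ = ∑ j, ∑ a, ∑ b, (W i a * X a j) * (W i b * X b j) := by
          refine Finset.sum_congr rfl fun j _ => ?_
          rw [Finset.sum_mul_sum]
      _ = ∑ a, ∑ j, ∑ b, (W i a * X a j) * (W i b * X b j) := Finset.sum_comm
      _ = ∑ a, ∑ b, ∑ j, (W i a * X a j) * (W i b * X b j) :=
          Finset.sum_congr rfl fun a _ => Finset.sum_comm
      _ = ∑ a, ∑ b, W i a * W i b * A a b := by
          refine Finset.sum_congr rfl fun a _ => Finset.sum_congr rfl fun b _ => ?_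
          rw [hAentry a b, Finset.mul_sum]
          exact Finset.sum_congr rfl fun j _ => by ring
  have hmeas_t : ∀ i, Measurable (t i) := by
    intro i
    have h : (t i) = fun W => ∑ a, ∑ b, W i a * W i b * A a b := funext fun W => texpand i W
    rw [h]
    exact Finset.measurable_sum _ fun a _ => Finset.measurable_sum _ fun b _ =>
      ((measurable_entry i a).mul (measurable_entry i b)).mul_const _
  have hint_t : ∀ i, Integrable (t i) μ := fun i =>
    (integrable_quad hμ i A).congr (Filter.Eventually.of_forall fun W => (texpand i W).symm)
  have hint_tsq : ∀ i, Integrable (fun W => (t i W)^2) μ := by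
    intro i
    have h4 : ∀ (a b c e : Fin d), Integrable
        (fun W => (W i a * W i b * A a b) * (W i c * W i e * A c e)) μ := fun a b c e =>
      ((integrable_mono4 hμ i a b c e).mul_const (A a b * A c e)).congr
        (Filter.Eventually.of_forall fun W => by ring)
    have hbig : Integrable (fun W => ∑ a, ∑ b, ∑ c, ∑ e,
        (W i a * W i b * A a b) * (W i c * W i e * A c e)) μ :=
      integrable_finset_sum _ fun a _ => integrable_finset_sum _ fun b _ =>
        integrable_finset_sum _ fun c _ => integrable_finset_sum _ fun e _ => h4 a b c e
    refine hbig.congr (Filter.Eventually.of_forall fun W => ?_)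
    show _ = (t i W)^2
    rw [texpand i W]
    exact (sq_double_sum _).symm
  have hval_t : ∀ i, ∫ W, t i W ∂μ = 1 := fun i => by
    rw [integral_congr_ae (Filter.Eventually.of_forall fun W => texpand i W)]
    exact intQuad hμ i A hAd
  have hval_tsq : ∀ i, ∫ W, (t i W)^2 ∂μ = ((d:ℝ)*(d+2))⁻¹ * ((d:ℝ)^2 + 2*S) := fun i => by
    rw [integral_congr_ae (Filter.Eventually.of_forall fun W =>
      congrArg (fun x : ℝ => x^2) (texpand i W))]
    rw [intQuadSq hμ hd i A hAs]
    have h5 : ∑ a, A a a = (d:ℝ) := by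
      rw [Finset.sum_congr rfl fun a _ => hAd a]; simp
    rw [h5, hSdef]
  -- bounds via the inverse matrix
  set B : Matrix (Fin d) (Fin d) ℝ := X⁻¹ with hBdef
  have hXB : X * B = 1 := Matrix.mul_nonsing_inv X (isUnit_iff_ne_zero.2 hX)
  have hdetB : B.det ≠ 0 := by
    intro h0
    have := congrArg Matrix.det hXB
    rw [Matrix.det_mul, h0, mul_zero, Matrix.det_one] at this
    norm_num at this
  set F : ℝ := ∑ b, ∑ j, (B j b)^2 with hFdef
  have hF0 : 0 < F := by
    rcases (Finset.sum_nonneg fun b _ => Finset.sum_nonneg fun j _ =>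
      sq_nonneg (B j b)).eq_or_lt with heq | h
    · exfalso
      apply hdetB
      have hB0 : B = 0 := by
        ext j b
        have h1 : ∀ b' ∈ Finset.univ, (0:ℝ) ≤ ∑ j', (B j' b')^2 :=
          fun b' _ => Finset.sum_nonneg fun j' _ => sq_nonneg _
        have h2 : ∑ j', (B j' b)^2 = 0 :=
          (Finset.sum_eq_zero_iff_of_nonneg h1).1 heq.symm b (Finset.mem_univ b)
        have h3 : (B j b)^2 = 0 :=
          (Finset.sum_eq_zero_iff_of_nonneg fun j' _ => sq_nonneg _).1 h2 j (Finset.mem_univ j)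
        have := pow_eq_zero_iff (n := 2) (by norm_num) |>.1 h3
        simpa using this
      rw [hB0]
      haveI : Nonempty (Fin d) := ⟨⟨0, hdnat0⟩⟩; exact Matrix.det_zero
    · exact h
  have hFinv0 : 0 < F⁻¹ := inv_pos.2 hF0
  have hkey : ∀ᵐ W ∂μ, (∀ i, F⁻¹ ≤ t i W ∧ t i W ≤ (d:ℝ)) ∧
      isoGap (BN (W * X)) = isoGap X + (1/(d:ℝ)) * ∑ i, Real.log (t i W) := by
    filter_upwards [hμ.2.1] with W hW
    have hWWT : W * Wᵀ = 1 := mul_eq_one_comm.mp hW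
    have hrowW : ∀ i, ∑ a, (W i a)^2 = 1 := by
      intro i
      have h3 : (W * Wᵀ) i i = (1 : Matrix (Fin d) (Fin d) ℝ) i i := by rw [hWWT]
      rw [Matrix.mul_apply, Matrix.one_apply_eq] at h3
      rw [← h3]
      exact Finset.sum_congr rfl fun a _ => by rw [Matrix.transpose_apply, pow_two]
    have hdetW : W.det * W.det = 1 := by
      have h4 : (Wᵀ * W).det = 1 := by rw [hW, Matrix.det_one]
      rwa [Matrix.det_mul, Matrix.det_transpose] at h4
    have hdetW0 : W.det ≠ 0 := by
      intro h0; rw [h0, mul_zero] at hdetW; norm_num at hdetW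
    have hdetY : (W * X).det = W.det * X.det := Matrix.det_mul W X
    have hdetY0 : (W * X).det ≠ 0 := by rw [hdetY]; exact mul_ne_zero hdetW0 hX
    have ht_eq : ∀ i, t i W = ∑ j, ((W * X) i j)^2 := fun i => rfl
    -- upper bound
    have hup : ∀ i, t i W ≤ (d:ℝ) := by
      intro i
      have h5 : ∀ j, ((W * X) i j)^2 ≤ ∑ a, (X a j)^2 := by
        intro j
        have hcs := Finset.sum_mul_sq_le_sq_mul_sq Finset.univ
          (fun a => W i a) (fun a => X a j)
        calc ((W * X) i j)^2 = (∑ a, W i a * X a j)^2 := by rw [Matrix.mul_apply]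
          _ ≤ (∑ a, (W i a)^2) * (∑ a, (X a j)^2) := hcs
          _ = ∑ a, (X a j)^2 := by rw [hrowW i, one_mul]
      calc t i W = ∑ j, ((W * X) i j)^2 := ht_eq i
        _ ≤ ∑ j, ∑ a, (X a j)^2 := Finset.sum_le_sum fun j _ => h5 j
        _ = ∑ a, ∑ j, (X a j)^2 := Finset.sum_comm
        _ = (d:ℝ) := by rw [Finset.sum_congr rfl fun a _ => hrows a]; simp
    -- lower bound
    have hlow : ∀ i, F⁻¹ ≤ t i W := by
      intro i
      have hYB : (W * X) * B = W := by
        rw [Matrix.mul_assoc, hXB, Matrix.mul_one]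
      have h8 : ∀ b', (W i b')^2 ≤ (∑ j, ((W * X) i j)^2) * (∑ j, (B j b')^2) := by
        intro b'
        have h9 : W i b' = ∑ j, (W * X) i j * B j b' := by
          conv_lhs => rw [← hYB]
          rw [Matrix.mul_apply]
        rw [h9]
        exact Finset.sum_mul_sq_le_sq_mul_sq Finset.univ _ _
      have h7 : 1 ≤ t i W * F := by
        calc (1:ℝ) = ∑ b', (W i b')^2 := (hrowW i).symm
          _ ≤ ∑ b', (∑ j, ((W * X) i j)^2) * (∑ j, (B j b')^2) :=
              Finset.sum_le_sum fun b' _ => h8 b'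
          _ = (∑ j, ((W * X) i j)^2) * F := by rw [← Finset.mul_sum]
          _ = t i W * F := by rw [← ht_eq i]
      have h10 : 1/F ≤ t i W := (div_le_iff₀ hF0).mpr h7
      rwa [one_div] at h10
    have htpos : ∀ i, 0 < t i W := fun i => lt_of_lt_of_le hFinv0 (hlow i)
    refine ⟨fun i => ⟨hlow i, hup i⟩, ?_⟩
    -- the isoGap identity
    have hv_sq : ∀ i, (rowNorm (W * X) i)^2 = t i W := fun i =>
      Real.sq_sqrt (Finset.sum_nonneg fun j _ => sq_nonneg _)
    have hv0 : ∀ i, 0 < rowNorm (W * X) i := fun i => by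
      have h12 := htpos i
      rw [ht_eq i] at h12
      show (0:ℝ) < Real.sqrt (∑ j, ((W * X) i j)^2)
      exact Real.sqrt_pos.2 h12
    have hBN : BN (W * X) = Matrix.diagonal (fun i => (rowNorm (W * X) i)⁻¹) * (W * X) := by
      ext i j
      rw [Matrix.diagonal_mul]
      show (W * X) i j / rowNorm (W * X) i = _
      rw [div_eq_inv_mul]
    have hdetBN : (BN (W * X)).det = (∏ i, (rowNorm (W * X) i)⁻¹) * (W * X).det := by
      rw [hBN, Matrix.det_mul, Matrix.det_diagonal]
    have hdetBN0 : (BN (W * X)).det ≠ 0 := by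
      rw [hdetBN]
      exact mul_ne_zero (Finset.prod_ne_zero_iff.2 fun i _ => inv_ne_zero (hv0 i).ne') hdetY0
    have htrBN : ((BN (W * X))ᵀ * BN (W * X)).trace = (d:ℝ) := by
      rw [HaarBN.trace_transpose_mul]
      have h10 : ∀ i, ∑ j, ((BN (W * X)) i j)^2 = 1 := by
        intro i
        have h11 : ∀ j, ((BN (W * X)) i j)^2 = ((W * X) i j)^2 / (t i W) := by
          intro j
          show ((W * X) i j / rowNorm (W * X) i)^2 = _
          rw [div_pow, hv_sq i]
        rw [Finset.sum_congr rfl fun j _ => h11 j, ← Finset.sum_div, ← ht_eq i,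
          div_self (htpos i).ne']
      rw [Finset.sum_congr rfl fun i _ => h10 i]
      simp
    have hgap1 : isoGap (BN (W * X)) = -(1/(d:ℝ)) * Real.log ((BN (W * X)).det ^ 2) :=
      isoGap_formula hdnat0 _ hdetBN0 htrBN
    have htrX : (Xᵀ * X).trace = (d:ℝ) := by
      rw [HaarBN.trace_transpose_mul, Finset.sum_congr rfl fun i _ => hrows i]
      simp
    have hgap2 : isoGap X = -(1/(d:ℝ)) * Real.log (X.det ^ 2) :=
      isoGap_formula hdnat0 X hX htrX
    have hprod_pos : 0 < ∏ i, t i W := Finset.prod_pos fun i _ => htpos i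
    have hdet_sq : (BN (W * X)).det^2 = (X.det^2) * (∏ i, t i W)⁻¹ := by
      rw [hdetBN, hdetY]
      have h11 : (∏ i, (rowNorm (W * X) i)⁻¹)^2 = (∏ i, t i W)⁻¹ := by
        rw [← Finset.prod_pow, ← Finset.prod_inv_distrib]
        refine Finset.prod_congr rfl fun i _ => ?_
        rw [← hv_sq i, inv_pow]
      calc ((∏ i, (rowNorm (W * X) i)⁻¹) * (W.det * X.det))^2
          = (∏ i, (rowNorm (W * X) i)⁻¹)^2 * ((W.det * W.det) * X.det^2) := by ring
        _ = (∏ i, t i W)⁻¹ * (1 * X.det^2) := by rw [h11, hdetW]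
        _ = X.det^2 * (∏ i, t i W)⁻¹ := by ring
    have hlogdet : Real.log ((BN (W * X)).det^2)
        = Real.log (X.det^2) - ∑ i, Real.log (t i W) := by
      rw [hdet_sq, Real.log_mul (pow_two_pos_of_ne_zero hX).ne'
        (inv_ne_zero hprod_pos.ne'), Real.log_inv,
        Real.log_prod (fun i _ => (htpos i).ne')]
      ring
    rw [hgap1, hgap2, hlogdet]
    ring
  have hint_log : ∀ i, Integrable (fun W => Real.log (t i W)) μ := by
    intro i
    refine (integrable_const (|Real.log F⁻¹| + |Real.log (d:ℝ)|)).mono'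
      (Real.measurable_log.comp (hmeas_t i)).aestronglyMeasurable ?_
    filter_upwards [hkey] with W hW
    have h1 := (hW.1 i).1
    have h2 := (hW.1 i).2
    have htpos : 0 < t i W := lt_of_lt_of_le hFinv0 h1
    have hl1 : Real.log F⁻¹ ≤ Real.log (t i W) := Real.log_le_log hFinv0 h1
    have hl2 : Real.log (t i W) ≤ Real.log (d:ℝ) := Real.log_le_log htpos h2
    rw [Real.norm_eq_abs, abs_le]
    constructor
    · linarith [neg_abs_le (Real.log F⁻¹), abs_nonneg (Real.log (d:ℝ))]
    · linarith [le_abs_self (Real.log (d:ℝ)), abs_nonneg (Real.log F⁻¹)]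
  have hint_f : Integrable (fun W => isoGap (BN (W * X))) μ := by
    have hg0 : Integrable (fun W => isoGap X + (1/(d:ℝ)) * ∑ i, Real.log (t i W)) μ :=
      (integrable_const _).add ((integrable_finset_sum _ fun i _ => hint_log i).const_mul _)
    exact hg0.congr (hkey.mono fun W hW => (hW.2).symm)
  have hint_quad : ∀ i, Integrable (fun W => (t i W - 1)^2 / (3*(d:ℝ))) μ := by
    intro i
    refine Integrable.div_const ?_ _
    have hA1 : Integrable (fun W => (t i W)^2 - 2*(t i W) + 1) μ :=
      ((hint_tsq i).sub ((hint_t i).const_mul 2)).add (integrable_const 1)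
    refine hA1.congr (Filter.Eventually.of_forall fun W => ?_)
    show (t i W)^2 - 2*(t i W) + 1 = (t i W - 1)^2
    ring
  have hint_gi : ∀ i, Integrable (fun W => (t i W - 1) - (t i W - 1)^2 / (3*(d:ℝ))) μ :=
    fun i => ((hint_t i).sub (integrable_const 1)).sub (hint_quad i)
  have hint_g : Integrable (fun W => isoGap X
      + (1/(d:ℝ)) * ∑ i, ((t i W - 1) - (t i W - 1)^2 / (3*(d:ℝ)))) μ :=
    (integrable_const _).add ((integrable_finset_sum _ fun i _ => hint_gi i).const_mul _)
  have hfg : (fun W => isoGap (BN (W * X))) ≤ᵐ[μ]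
      (fun W => isoGap X + (1/(d:ℝ)) * ∑ i, ((t i W - 1) - (t i W - 1)^2 / (3*(d:ℝ)))) := by
    filter_upwards [hkey] with W hW
    have hsum : ∑ i, Real.log (t i W)
        ≤ ∑ i, ((t i W - 1) - (t i W - 1)^2 / (3*(d:ℝ))) :=
      Finset.sum_le_sum fun i _ =>
        log_le_quad hd2R (lt_of_lt_of_le hFinv0 (hW.1 i).1) (hW.1 i).2
    calc isoGap (BN (W * X)) = isoGap X + (1/(d:ℝ)) * ∑ i, Real.log (t i W) := hW.2
      _ ≤ _ := by
        have h1d : (0:ℝ) ≤ 1/(d:ℝ) := by positivity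
        exact add_le_add (le_refl _) (mul_le_mul_of_nonneg_left hsum h1d)
  have hval_quad : ∀ i, ∫ W, (t i W - 1)^2 ∂μ
      = ((d:ℝ)*(d+2))⁻¹ * ((d:ℝ)^2 + 2*S) - 1 := by
    intro i
    have hrw : ∫ W, (t i W - 1)^2 ∂μ = ∫ W, ((t i W)^2 - 2*(t i W) + 1) ∂μ :=
      integral_congr_ae (Filter.Eventually.of_forall fun W => by ring)
    have hA1 : Integrable (fun W => (t i W)^2 - 2*(t i W)) μ :=
      (hint_tsq i).sub ((hint_t i).const_mul 2)
    rw [hrw, integral_add hA1 (integrable_const 1),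
      integral_sub (hint_tsq i) ((hint_t i).const_mul 2), hval_tsq i, integral_const_mul,
      hval_t i, integral_const]
    simp
    ring
  have hval_gi : ∀ i, ∫ W, ((t i W - 1) - (t i W - 1)^2 / (3*(d:ℝ))) ∂μ
      = -((((d:ℝ)*(d+2))⁻¹ * ((d:ℝ)^2 + 2*S) - 1) / (3*(d:ℝ))) := by
    intro i
    have hB1 : Integrable (fun W => t i W - 1) μ := (hint_t i).sub (integrable_const 1)
    rw [integral_sub hB1 (hint_quad i),
      integral_sub (hint_t i) (integrable_const 1), hval_t i, integral_div, hval_quad i,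
      integral_const]
    simp
  have hval_g : ∫ W, (isoGap X
        + (1/(d:ℝ)) * ∑ i, ((t i W - 1) - (t i W - 1)^2/(3*(d:ℝ)))) ∂μ
      = isoGap X - (((d:ℝ)*(d+2))⁻¹ * ((d:ℝ)^2 + 2*S) - 1) / (3*(d:ℝ)) := by
    rw [integral_add (integrable_const _)
        ((integrable_finset_sum _ fun i _ => hint_gi i).const_mul _),
      integral_const, integral_const_mul, integral_finset_sum _ (fun i _ => hint_gi i),
      Finset.sum_congr rfl (fun i _ => hval_gi i), Finset.sum_const, Finset.card_univ,
      Fintype.card_fin, nsmul_eq_mul]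
    have hdne : ((d:ℝ)) ≠ 0 := hd0.ne'
    simp
    field_simp
    ring
  have hdd2 : (0:ℝ) < (d:ℝ)*((d:ℝ)+2) := by positivity
  have hne1 : ((d:ℝ)^2*((d:ℝ)+2)) ≠ 0 := by positivity
  have hne2 : ((d:ℝ)*((d:ℝ)+2)) ≠ 0 := by positivity
  have hne3 : (d:ℝ) ≠ 0 := hd0.ne' 
  have hkey_num : (((d:ℝ)*(d+2))⁻¹ * ((d:ℝ)^2 + 2*S) - 1) / (3*(d:ℝ))
      = (2/3) * (s / ((d:ℝ)^2*((d:ℝ)+2))) := by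
    rw [hs_eq]
    field_simp
    ring
  set u : ℝ := s / ((d:ℝ)^2*((d:ℝ)+2)) with hudef
  have hu0 : 0 ≤ u := div_nonneg hs0 (by positivity)
  have hu_half : u ≤ 1/2 := by
    rw [hudef, div_le_iff₀ (by positivity : (0:ℝ) < (d:ℝ)^2*((d:ℝ)+2))]
    nlinarith [hs_le, hd2R]
  have harg : 1 - s / (2*(d:ℝ)^2*((d:ℝ)+2)) = 1 - u/2 := by
    rw [hudef]; field_simp
  have harg_pos : (0:ℝ) < 1 - u/2 := by linarith
  have hlog_ge : -(2/3)*u ≤ Real.log (1 - u/2) := by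
    have h2 := one_sub_inv_le_log harg_pos
    have h3 : (1 - u/2)⁻¹ ≤ 1 + (2/3)*u := by
      rw [inv_eq_one_div, div_le_iff₀ harg_pos]
      nlinarith
    linarith
  have hlog_le : Real.log (1 - u/2) ≤ 0 :=
    Real.log_nonpos (by linarith) (by linarith)
  constructor
  · calc ∫ W, isoGap (BN (W * X)) ∂μ
        ≤ ∫ W, (isoGap X + (1/(d:ℝ)) * ∑ i, ((t i W - 1) - (t i W - 1)^2/(3*(d:ℝ)))) ∂μ :=
          integral_mono_ae hint_f hint_g hfg
      _ = isoGap X - (((d:ℝ)*(d+2))⁻¹ * ((d:ℝ)^2 + 2*S) - 1) / (3*(d:ℝ)) := hval_g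
      _ = isoGap X - (2/3)*u := by rw [hkey_num]
      _ ≤ isoGap X + Real.log (1 - s / (2*(d:ℝ)^2*((d:ℝ)+2))) := by
          rw [harg]; linarith
  · rw [show (1 - s / (2*(d:ℝ)^2*((d:ℝ)+2))) = 1 - u/2 from harg]
    exact hlog_le
end

section
/- Let X ∈ ℝ^{d×d} be nonsingular with Tr(XXᵀ) = d, and let J_BN(X) denote the Fréchet derivative of the map BN at X, regarded as a linear operator on ℝ^{d×d} with operator norm ‖·‖_op taken with respect to the Frobenius norm. Then log ‖J_BN(X)‖_op ≤ d·φ(X) + 1. Moreover, if φ(X) ≤ 1/(16d), then log ‖J_BN(X)‖_op ≤ 2·√(d·φ(X)). -/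
open MeasureTheory Matrix

attribute [local instance] Matrix.frobeniusNormedAddCommGroup Matrix.frobeniusNormedSpace

open Finset

lemma my_hadamard {d : ℕ} (X : Matrix (Fin d) (Fin d) ℝ) :
    X.det ^ 2 ≤ ∏ i, (∑ j, X i j ^ 2) := by
  classical
  haveI : WellFoundedLT (Fin d) := Finite.to_wellFoundedLT
  set f : Fin d → EuclideanSpace ℝ (Fin d) := fun i => (WithLp.equiv 2 (Fin d → ℝ)).symm (X i) with hf
  have h : Module.finrank ℝ (EuclideanSpace ℝ (Fin d)) = Fintype.card (Fin d) := by
    simp [finrank_euclideanSpace]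
  set B : OrthonormalBasis (Fin d) ℝ (EuclideanSpace ℝ (Fin d)) := InnerProductSpace.gramSchmidtOrthonormalBasis h f with hB
  have hdet : B.toBasis.det f = ∏ i, inner ℝ (B i) (f i) :=
    InnerProductSpace.gramSchmidtOrthonormalBasis_det h f
  set std := EuclideanSpace.basisFun (Fin d) ℝ with hstd
  have h1 : std.toBasis.toMatrix f = std.toBasis.toMatrix (B.toBasis) * B.toBasis.toMatrix f :=
    (Module.Basis.toMatrix_mul_toMatrix _ _ _).symm
  have h2 : std.toBasis.det f = X.det := by
    rw [Module.Basis.det_apply]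
    have : std.toBasis.toMatrix f = Xᵀ := by
      ext i j
      simp only [Module.Basis.toMatrix_apply, OrthonormalBasis.coe_toBasis_repr_apply, EuclideanSpace.basisFun_repr, transpose_apply]
      rfl
    rw [this, Matrix.det_transpose]
  have h3 : |X.det| ≤ ∏ i, ‖f i‖ := by
    have hd : X.det = (std.toBasis.toMatrix (B.toBasis)).det * (∏ i, inner ℝ (B i) (f i) : ℝ) := by
      rw [← hdet, ← h2, Module.Basis.det_apply, Module.Basis.det_apply, h1, Matrix.det_mul]
    have hB1 : |(std.toBasis.toMatrix (B.toBasis)).det| = 1 := by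
      have := std.det_to_matrix_orthonormalBasis (b := B)
      rwa [Module.Basis.det_apply, Real.norm_eq_abs] at this
    calc |X.det| = |(std.toBasis.toMatrix (B.toBasis)).det| * |(∏ i, inner ℝ (B i) (f i) : ℝ)| := by
          rw [hd, abs_mul]
      _ = |(∏ i, inner ℝ (B i) (f i) : ℝ)| := by rw [hB1, one_mul]
      _ ≤ ∏ i, ‖f i‖ := by
          rw [Finset.abs_prod]
          apply Finset.prod_le_prod (fun i _ => abs_nonneg _)
          intro i _
          calc |(inner ℝ (B i) (f i) : ℝ)| ≤ ‖B i‖ * ‖f i‖ := abs_real_inner_le_norm _ _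
            _ = ‖f i‖ := by rw [B.orthonormal.1 i, one_mul]
  calc X.det ^ 2 = |X.det| ^ 2 := (sq_abs _).symm
    _ ≤ (∏ i, ‖f i‖) ^ 2 := by
        apply pow_le_pow_left₀ (abs_nonneg _) h3
    _ = ∏ i, ‖f i‖ ^ 2 := by rw [← Finset.prod_pow]
    _ = ∏ i, (∑ j, X i j ^ 2) := by
        apply Finset.prod_congr rfl
        intro i _
        rw [EuclideanSpace.norm_eq, Real.sq_sqrt]
        · simp [f, sq_abs]
        · positivity

/-- entry evaluation as a continuous linear map (w.r.t. Frobenius norm). -/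
noncomputable def entryCLM {d : ℕ} (i j : Fin d) : Matrix (Fin d) (Fin d) ℝ →L[ℝ] ℝ :=
  LinearMap.toContinuousLinearMap
    { toFun := fun Y => Y i j
      map_add' := fun _ _ => rfl
      map_smul' := fun _ _ => rfl }

@[simp] lemma entryCLM_apply {d : ℕ} (i j : Fin d) (Y : Matrix (Fin d) (Fin d) ℝ) :
    entryCLM i j Y = Y i j := rfl

lemma frob_norm_eq {d : ℕ} (A : Matrix (Fin d) (Fin d) ℝ) :
    ‖A‖ = Real.sqrt (∑ i, ∑ j, A i j ^ 2) := by
  rw [Matrix.frobenius_norm_def, Real.sqrt_eq_rpow]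
  congr 1
  refine Finset.sum_congr rfl fun i _ => Finset.sum_congr rfl fun j _ => ?_
  rw [show ((2:ℝ) = ((2:ℕ):ℝ)) by norm_num, Real.rpow_natCast, Real.norm_eq_abs, sq_abs]

lemma bn_opnorm_bound {d : ℕ} (X : Matrix (Fin d) (Fin d) ℝ)
    (hrow : ∀ i, (0:ℝ) < ∑ k, X i k ^ 2) (ρ : ℝ) (hρ : 0 < ρ)
    (hρle : ∀ i, ρ ≤ rowNorm X i) :
    @Norm.norm _ ContinuousLinearMap.hasOpNorm (fderiv ℝ (BN (d := d)) X) ≤ ρ⁻¹ := by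
  classical
  set r : Fin d → ℝ := fun i => rowNorm X i with hr
  have hrpos : ∀ i, 0 < r i := fun i => lt_of_lt_of_le hρ (hρle i)
  have hrsq : ∀ i, r i ^ 2 = ∑ k, X i k ^ 2 := fun i =>
    Real.sq_sqrt (Finset.sum_nonneg fun k _ => sq_nonneg _)
  set c : Fin d → Matrix (Fin d) (Fin d) ℝ → ℝ := fun i E => ∑ k, X i k * E i k with hc
  set Lent : Fin d → Fin d → (Matrix (Fin d) (Fin d) ℝ →L[ℝ] ℝ) := fun i j =>
    (r i)⁻¹ • entryCLM i j - (X i j / r i ^ 3) • ∑ k, X i k • entryCLM i k with hLent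
  have hLentApply : ∀ i j E, Lent i j E = E i j / r i - X i j * c i E / r i ^ 3 := by
    intro i j E
    have hS : (∑ k, X i k • entryCLM (d := d) i k) E = ∑ k, X i k * E i k := by
      simp [ContinuousLinearMap.sum_apply]
    simp only [hLent, ContinuousLinearMap.coe_sub', Pi.sub_apply,
      ContinuousLinearMap.smul_apply, hS, entryCLM_apply, smul_eq_mul, hc]
    ring
  set L : Matrix (Fin d) (Fin d) ℝ →L[ℝ] Matrix (Fin d) (Fin d) ℝ :=
    ∑ i, ∑ j, (Lent i j).smulRight (Matrix.single i j (1:ℝ)) with hL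
  -- derivative of each scalar coordinate
  have hscalar : ∀ i j, HasFDerivAt (fun Y : Matrix (Fin d) (Fin d) ℝ =>
      Y i j / Real.sqrt (∑ k, Y i k ^ 2)) (Lent i j) X := by
    intro i j
    have hg : HasFDerivAt (fun Y : Matrix (Fin d) (Fin d) ℝ => ∑ k, Y i k ^ 2)
        (∑ k, (2 * X i k) • entryCLM i k) X := by
      apply HasFDerivAt.fun_sum
      intro k _
      have := ((entryCLM (d := d) i k).hasFDerivAt (x := X)).mul
        ((entryCLM (d := d) i k).hasFDerivAt (x := X))
      simp only [entryCLM_apply] at this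
      have h2 : HasFDerivAt (fun Y : Matrix (Fin d) (Fin d) ℝ => Y i k * Y i k)
          ((2 * X i k) • entryCLM i k) X := by
        rw [two_mul, add_smul]
        exact this
      simp only [← pow_two] at h2
      exact h2
    have hgne : (∑ k, X i k ^ 2) ≠ 0 := (hrow i).ne'
    have hsqrt := hg.sqrt hgne
    have hrne : r i ≠ 0 := (hrpos i).ne'
    have hinv : HasFDerivAt (fun Y : Matrix (Fin d) (Fin d) ℝ =>
        (Real.sqrt (∑ k, Y i k ^ 2))⁻¹)
        ((-(r i ^ 2)⁻¹) • ((1 / (2 * r i)) • ∑ k, (2 * X i k) • entryCLM i k)) X := by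
      have := (hasDerivAt_inv (x := r i) hrne).comp_hasFDerivAt X hsqrt
      exact this
    have hmul := ((entryCLM (d := d) i j).hasFDerivAt (x := X)).mul hinv
    simp only [entryCLM_apply] at hmul
    have heq : (fun Y : Matrix (Fin d) (Fin d) ℝ => Y i j / Real.sqrt (∑ k, Y i k ^ 2))
        = fun Y : Matrix (Fin d) (Fin d) ℝ => Y i j * (Real.sqrt (∑ k, Y i k ^ 2))⁻¹ := by
      funext Y; rw [div_eq_mul_inv]
    rw [heq]
    refine hmul.congr_fderiv ?_
    ext E
    refine Eq.trans ?_ (hLentApply i j E).symm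
    have hri : Real.sqrt (∑ k, X i k ^ 2) = r i := rfl
    have hS2 : (∑ k, (2 * X i k) • entryCLM (d := d) i k) E = 2 * ∑ k, X i k * E i k := by
      rw [ContinuousLinearMap.sum_apply, Finset.mul_sum]
      refine Finset.sum_congr rfl fun x _ => ?_
      simp [mul_assoc]
    refine Eq.trans (b := X i j * (-(r i ^ 2)⁻¹ * ((1 / (2 * r i)) * (2 * ∑ k, X i k * E i k)))
      + (r i)⁻¹ * E i j) ?_ ?_
    · rw [← hS2]; rfl
    simp only [hc]
    field_simp
    ring
  -- derivative of BN
  have hBNeq : BN (d := d) = fun Y => ∑ i, ∑ j,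
      (Y i j / Real.sqrt (∑ k, Y i k ^ 2)) • Matrix.single i j (1:ℝ) := by
    funext Y
    conv_lhs => rw [matrix_eq_sum_single (BN Y)]
    refine Finset.sum_congr rfl fun i _ => Finset.sum_congr rfl fun j _ => ?_
    rw [smul_single, smul_eq_mul, mul_one]
    rfl
  have hBN : HasFDerivAt (BN (d := d)) L X := by
    rw [hBNeq, hL]
    apply HasFDerivAt.fun_sum
    intro i _
    apply HasFDerivAt.fun_sum
    intro j _
    exact (hscalar i j).smul_const _
  rw [show @Norm.norm _ ContinuousLinearMap.hasOpNorm (fderiv ℝ (BN (d := d)) X) = @Norm.norm _ ContinuousLinearMap.hasOpNorm L from congrArg _ hBN.fderiv]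
  -- operator norm bound
  refine ContinuousLinearMap.opNorm_le_bound L (by positivity) fun E => ?_
  have hLE : ∀ a b, (L E) a b = E a b / r a - X a b * c a E / r a ^ 3 := by
    intro a b
    rw [hL]
    simp only [ContinuousLinearMap.sum_apply, ContinuousLinearMap.smulRight_apply,
      Matrix.sum_apply, Matrix.smul_apply, smul_eq_mul, Matrix.single, of_apply,
      mul_ite, mul_one, mul_zero, ite_and, Finset.sum_ite_eq, Finset.sum_ite_eq',
      Finset.mem_univ, if_true]
    have hcollapse : (∑ x : Fin d, ∑ y : Fin d,
        if x = a then if y = b then (Lent x y) E else 0 else 0) = (Lent a b) E := by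
      rw [Finset.sum_eq_single a (fun x _ hx => by simp [hx])
        (fun h => absurd (Finset.mem_univ a) h)]
      rw [Finset.sum_eq_single b (fun y _ hy => by simp [hy])
        (fun h => absurd (Finset.mem_univ b) h)]
      simp
    rw [hcollapse, hLentApply a b E]
  rw [frob_norm_eq, frob_norm_eq]
  have key : ∑ a, ∑ b, (L E) a b ^ 2 ≤ ρ⁻¹ ^ 2 * ∑ a, ∑ b, E a b ^ 2 := by
    rw [Finset.mul_sum]
    refine Finset.sum_le_sum fun a _ => ?_
    have hca : (∑ b, X a b * E a b) = c a E := rfl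
    have hrow_eq : ∑ b, (L E) a b ^ 2
        = (∑ b, E a b ^ 2) / r a ^ 2 - (c a E) ^ 2 / r a ^ 4 := by
      have h1 : ∀ b, (L E) a b ^ 2 = E a b ^ 2 / r a ^ 2
          - (X a b * E a b) * (2 * c a E / r a ^ 3 / r a)
          + X a b ^ 2 * (c a E ^ 2 / r a ^ 6) := by
        intro b
        rw [hLE a b]
        have := (hrpos a).ne'
        field_simp
        ring
      calc ∑ b, (L E) a b ^ 2
          = ∑ b, (E a b ^ 2 / r a ^ 2 - (X a b * E a b) * (2 * c a E / r a ^ 3 / r a)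
              + X a b ^ 2 * (c a E ^ 2 / r a ^ 6)) :=
            Finset.sum_congr rfl fun b _ => h1 b
        _ = (∑ b, E a b ^ 2) / r a ^ 2 - (∑ b, X a b * E a b) * (2 * c a E / r a ^ 3 / r a)
              + (∑ b, X a b ^ 2) * (c a E ^ 2 / r a ^ 6) := by
            rw [Finset.sum_add_distrib, Finset.sum_sub_distrib, Finset.sum_div,
              ← Finset.sum_mul, ← Finset.sum_mul]
        _ = (∑ b, E a b ^ 2) / r a ^ 2 - (c a E) ^ 2 / r a ^ 4 := by
            rw [hca, ← hrsq a]
            have := (hrpos a).ne'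
            field_simp
            ring
    have h2 : (c a E) ^ 2 / r a ^ 4 ≥ 0 := by positivity
    have h3 : (∑ b, E a b ^ 2) / r a ^ 2 ≤ ρ⁻¹ ^ 2 * ∑ b, E a b ^ 2 := by
      rw [div_eq_mul_inv, mul_comm]
      apply mul_le_mul_of_nonneg_right _ (Finset.sum_nonneg fun b _ => sq_nonneg _)
      rw [← inv_pow]
      apply pow_le_pow_left₀ (inv_nonneg.mpr (hrpos a).le)
      exact inv_anti₀ hρ (hρle a)
    linarith [hrow_eq, h2, h3]
  calc Real.sqrt (∑ a, ∑ b, (L E) a b ^ 2)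
      ≤ Real.sqrt (ρ⁻¹ ^ 2 * ∑ a, ∑ b, E a b ^ 2) := Real.sqrt_le_sqrt key
    _ = ρ⁻¹ * Real.sqrt (∑ a, ∑ b, E a b ^ 2) := by
        rw [Real.sqrt_mul (by positivity), Real.sqrt_sq (by positivity)]

/-- for nonsingular `X` with `Tr(XXᵀ) = d`, the Fréchet derivative of `BN`
at `X` (operator norm w.r.t. the Frobenius norm) satisfies
`log ‖J_BN(X)‖ ≤ d·φ(X) + 1`, and if moreover `φ(X) ≤ 1/(16d)` then
`log ‖J_BN(X)‖ ≤ 2√(d·φ(X))`. -/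
theorem log_opNorm_fderiv_BN_le {d : ℕ} (hd : 0 < d)
    (X : Matrix (Fin d) (Fin d) ℝ) (hX : X.det ≠ 0)
    (htr : (X * Xᵀ).trace = (d : ℝ)) :
    Real.log (@Norm.norm _ ContinuousLinearMap.hasOpNorm (fderiv ℝ (BN (d := d)) X)) ≤ d * isoGap X + 1 ∧
      (isoGap X ≤ 1 / (16 * d) →
        Real.log (@Norm.norm _ ContinuousLinearMap.hasOpNorm (fderiv ℝ (BN (d := d)) X)) ≤ 2 * Real.sqrt (d * isoGap X)) := by
  classical
  have hd' : (d : ℝ) ≠ 0 := Nat.cast_ne_zero.mpr hd.ne'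
  have hdpos : (0:ℝ) < d := Nat.cast_pos.mpr hd
  set s : Fin d → ℝ := fun i => ∑ j, X i j ^ 2 with hs
  have hrowpos : ∀ i, 0 < s i := by
    intro i
    rcases (Finset.sum_nonneg fun j _ => sq_nonneg (X i j)).lt_or_eq with h | h
    · exact h
    · exfalso
      apply hX
      apply Matrix.det_eq_zero_of_row_eq_zero i
      intro j
      have := (Finset.sum_eq_zero_iff_of_nonneg fun j _ => sq_nonneg (X i j)).mp h.symm
      exact pow_eq_zero_iff (n := 2) (by norm_num) |>.mp (this j (Finset.mem_univ j))
  have hsumtr : ∑ i, s i = (d : ℝ) := by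
    rw [← htr]
    simp only [hs, Matrix.trace, Matrix.diag, Matrix.mul_apply, Matrix.transpose_apply]
    exact Finset.sum_congr rfl fun i _ => Finset.sum_congr rfl fun j _ => (sq (X i j))
  have hdet2pos : (0:ℝ) < X.det ^ 2 :=
    lt_of_le_of_ne (sq_nonneg _) (Ne.symm (pow_ne_zero 2 hX))
  -- compute d * isoGap X
  set t : ℝ := d * isoGap X with htdef
  have ht : t = -Real.log (X.det ^ 2) := by
    have hAdet : (Xᵀ * X).det = X.det ^ 2 := by
      rw [Matrix.det_mul, Matrix.det_transpose, sq]
    have hAtr : (Xᵀ * X).trace = (d : ℝ) := by rw [Matrix.trace_mul_comm]; exact htr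
    rw [htdef, isoGap, hAdet, hAtr]
    rw [show ((1 / d : ℝ) * d) = 1 by field_simp, div_one, Real.log_rpow hdet2pos]
    field_simp
  -- Hadamard and consequences
  have hhad : X.det ^ 2 ≤ ∏ i, s i := my_hadamard X
  have hGsum : ∑ i, (s i - 1 - Real.log (s i)) = -Real.log (∏ i, s i) := by
    rw [Real.log_prod fun i _ => (hrowpos i).ne']
    rw [Finset.sum_sub_distrib, Finset.sum_sub_distrib, hsumtr]
    simp
  have hlogle : -Real.log (∏ i, s i) ≤ t := by
    rw [ht]
    exact neg_le_neg (Real.log_le_log hdet2pos hhad)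
  have hGnonneg : ∀ i, 0 ≤ s i - 1 - Real.log (s i) := fun i =>
    sub_nonneg.mpr (Real.log_le_sub_one_of_pos (hrowpos i))
  have ht0 : 0 ≤ t := le_trans (by rw [← hGsum]; exact Finset.sum_nonneg fun i _ => hGnonneg i)
    hlogle
  -- the minimizing row
  obtain ⟨m, -, hm⟩ := Finset.exists_min_image Finset.univ s ⟨⟨0, hd⟩, Finset.mem_univ _⟩
  have hGm : s m - 1 - Real.log (s m) ≤ t :=
    le_trans (le_trans (Finset.single_le_sum (fun i _ => hGnonneg i) (Finset.mem_univ m))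
      (le_of_eq hGsum)) hlogle
  -- operator norm bound
  set ρ : ℝ := Real.sqrt (s m) with hρdef
  have hρpos : 0 < ρ := Real.sqrt_pos.mpr (hrowpos m)
  have hJ : @Norm.norm _ ContinuousLinearMap.hasOpNorm (fderiv ℝ (BN (d := d)) X) ≤ ρ⁻¹ :=
    bn_opnorm_bound X hrowpos ρ hρpos fun i => Real.sqrt_le_sqrt (hm i (Finset.mem_univ i))
  have hmain : ∀ K : ℝ, -Real.log (s m) / 2 ≤ K → 0 ≤ K →
      Real.log (@Norm.norm _ ContinuousLinearMap.hasOpNorm (fderiv ℝ (BN (d := d)) X)) ≤ K := by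
    intro K h1 h2
    rcases eq_or_ne (@Norm.norm _ ContinuousLinearMap.hasOpNorm (fderiv ℝ (BN (d := d)) X)) 0 with h | h
    · rw [h, Real.log_zero]; exact h2
    · have hpos : 0 < @Norm.norm _ ContinuousLinearMap.hasOpNorm (fderiv ℝ (BN (d := d)) X) := (norm_nonneg _).lt_of_ne' h
      calc Real.log (@Norm.norm _ ContinuousLinearMap.hasOpNorm (fderiv ℝ (BN (d := d)) X)) ≤ Real.log ρ⁻¹ := Real.log_le_log hpos hJ
        _ = -Real.log ρ := Real.log_inv ρ
        _ = -(Real.log (s m) / 2) := by rw [hρdef, Real.log_sqrt (hrowpos m).le]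
        _ ≤ K := by linarith
  constructor
  · apply hmain (t + 1) _ (by linarith)
    have := hrowpos m
    linarith
  · intro h16
    have ht16 : t ≤ 1 / 16 := by
      rw [htdef]
      calc (d : ℝ) * isoGap X ≤ d * (1 / (16 * d)) :=
            mul_le_mul_of_nonneg_left h16 hdpos.le
        _ = 1 / 16 := by field_simp
    have hst : 0 ≤ Real.sqrt t := Real.sqrt_nonneg t
    apply hmain _ _ (by positivity)
    by_cases hs1 : 1 ≤ s m
    · have := Real.log_nonneg hs1
      linarith
    · push_neg at hs1
      set a : ℝ := Real.sqrt (s m) with hadef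
      have hapos : 0 < a := Real.sqrt_pos.mpr (hrowpos m)
      have ha1 : a < 1 := by
        rw [hadef, show (1:ℝ) = Real.sqrt 1 by rw [Real.sqrt_one]]
        exact Real.sqrt_lt_sqrt (hrowpos m).le hs1
      have hsq : a ^ 2 = s m := Real.sq_sqrt (hrowpos m).le
      have hloga : Real.log a = Real.log (s m) / 2 := Real.log_sqrt (hrowpos m).le
      have hla : Real.log a ≤ a - 1 := Real.log_le_sub_one_of_pos hapos
      set w : ℝ := 1 - a with hwdef
      have hw0 : 0 < w := by simp [hwdef]; linarith
      have hw2 : w ^ 2 ≤ t := by nlinarith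
      have hwt : w ≤ Real.sqrt t := by
        have := Real.sqrt_le_sqrt hw2
        rwa [Real.sqrt_sq hw0.le] at this
      have hst4 : Real.sqrt t ≤ 1 / 4 := by
        have h1 : Real.sqrt t ≤ Real.sqrt (1 / 16) := Real.sqrt_le_sqrt ht16
        have h2 : Real.sqrt (1 / 16 : ℝ) = 1 / 4 := by
          rw [show (1/16 : ℝ) = (1/4)^2 by norm_num, Real.sqrt_sq (by norm_num)]
        linarith
      have ha34 : 3 / 4 ≤ a := by linarith
      have hainv : a⁻¹ ≤ 4 / 3 := by
        calc a⁻¹ ≤ (3/4 : ℝ)⁻¹ := inv_anti₀ (by norm_num) ha34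
          _ = 4 / 3 := by norm_num
      have hlainv : Real.log a⁻¹ ≤ a⁻¹ - 1 := Real.log_le_sub_one_of_pos (by positivity)
      rw [Real.log_inv] at hlainv
      have hid : a⁻¹ - 1 = w * a⁻¹ := by
        rw [hwdef]; field_simp
      have hfin : a⁻¹ - 1 ≤ 4 / 3 * w := by
        rw [hid, mul_comm]
        exact mul_le_mul_of_nonneg_right hainv hw0.le
      linarith
end

section
/- Let X ∈ ℝ^{d×d} be nonsingular and let λ_min denote the smallest eigenvalue of XXᵀ. Let J_BN(X) be the Fréchet derivative of the map BN at X, regarded as a linear operator on ℝ^{d×d} with operator norm ‖·‖_op taken with respect to the Frobenius norm. Then ‖J_BN(X)‖_op² ≤ 1/λ_min. -/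
open MeasureTheory Matrix

attribute [local instance] Matrix.frobeniusNormedAddCommGroup Matrix.frobeniusNormedSpace

section Aux

/-- Sharp local Lipschitz bound for the normalization map in a real inner product space. -/
lemma normalize_sub_norm_le {F : Type*} [NormedAddCommGroup F] [InnerProductSpace ℝ F]
    {x y : F} {r : ℝ} (hr : 0 < r) (hx : r ≤ ‖x‖) (hy : r ≤ ‖y‖) :
    ‖‖x‖⁻¹ • x - ‖y‖⁻¹ • y‖ ≤ ‖x - y‖ / r := by
  have ha : 0 < ‖x‖ := hr.trans_le hx
  have hb : 0 < ‖y‖ := hr.trans_le hy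
  set a := ‖x‖ with hadef
  set b := ‖y‖ with hbdef
  set t : ℝ := inner ℝ x y with htdef
  have ht : |t| ≤ a * b := abs_real_inner_le_norm x y
  have hL : ‖a⁻¹ • x - b⁻¹ • y‖ ^ 2 = 2 - 2 * t / (a * b) := by
    rw [norm_sub_sq_real, norm_smul, norm_smul, real_inner_smul_left, real_inner_smul_right,
      Real.norm_eq_abs, Real.norm_eq_abs, abs_inv, abs_inv, abs_of_pos ha, abs_of_pos hb,
      ← hadef, ← hbdef, ← htdef]
    field_simp
    ring
  have hR : ‖x - y‖ ^ 2 = a ^ 2 - 2 * t + b ^ 2 := norm_sub_sq_real x y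
  have habs := abs_le.1 ht
  have key : (2 - 2 * t / (a * b)) * r ^ 2 ≤ a ^ 2 - 2 * t + b ^ 2 := by
    have hab : 0 < a * b := mul_pos ha hb
    rw [show 2 - 2 * t / (a * b) = (2 * (a * b) - 2 * t) / (a * b) by field_simp,
      div_mul_eq_mul_div, div_le_iff₀ hab]
    rcases le_total a b with hcase | hcase
    · have h1 : r ^ 2 ≤ a ^ 2 := by nlinarith
      nlinarith [mul_nonneg (mul_nonneg ha.le (sub_nonneg.2 hcase))
        (show (0:ℝ) ≤ b ^ 2 + a * b - 2 * t by nlinarith),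
        mul_le_mul_of_nonneg_left h1 (show (0:ℝ) ≤ 2 * (a * b) - 2 * t by nlinarith)]
    · have h1 : r ^ 2 ≤ b ^ 2 := by nlinarith
      nlinarith [mul_nonneg (mul_nonneg hb.le (sub_nonneg.2 hcase))
        (show (0:ℝ) ≤ a ^ 2 + a * b - 2 * t by nlinarith),
        mul_le_mul_of_nonneg_left h1 (show (0:ℝ) ≤ 2 * (a * b) - 2 * t by nlinarith)]
  have h2 : ‖a⁻¹ • x - b⁻¹ • y‖ ^ 2 ≤ (‖x - y‖ / r) ^ 2 := by
    rw [hL, div_pow, hR, le_div_iff₀ (pow_pos hr 2)]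
    exact key
  calc ‖a⁻¹ • x - b⁻¹ • y‖ = Real.sqrt (‖a⁻¹ • x - b⁻¹ • y‖ ^ 2) :=
        (Real.sqrt_sq (norm_nonneg _)).symm
    _ ≤ Real.sqrt ((‖x - y‖ / r) ^ 2) := Real.sqrt_le_sqrt h2
    _ = ‖x - y‖ / r := Real.sqrt_sq (by positivity)

variable {d : ℕ}

/-- View a row as an element of Euclidean space. -/
noncomputable def toE {d : ℕ} (v : Fin d → ℝ) : EuclideanSpace ℝ (Fin d) :=
  (WithLp.equiv 2 _).symm v

lemma toE_apply (v : Fin d → ℝ) (j : Fin d) : toE v j = v j := rfl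

lemma toE_sub (v w : Fin d → ℝ) : toE v - toE w = toE (v - w) := rfl

lemma norm_toE (v : Fin d → ℝ) : ‖toE v‖ = Real.sqrt (∑ j, v j ^ 2) := by
  rw [EuclideanSpace.norm_eq]
  congr 1
  refine Finset.sum_congr rfl fun j _ => ?_
  rw [toE_apply, Real.norm_eq_abs, sq_abs]

lemma rowNorm_eq (X : Matrix (Fin d) (Fin d) ℝ) (i : Fin d) :
    rowNorm X i = ‖toE (X i)‖ := (norm_toE _).symm

lemma fro_norm_eq (A : Matrix (Fin d) (Fin d) ℝ) :
    ‖A‖ = Real.sqrt (∑ i, ∑ j, A i j ^ 2) := by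
  rw [Matrix.frobenius_norm_def, Real.sqrt_eq_rpow]
  congr 1
  refine Finset.sum_congr rfl fun i _ => Finset.sum_congr rfl fun j _ => ?_
  rw [Real.rpow_two, Real.norm_eq_abs, sq_abs]

lemma fro_norm_sq (A : Matrix (Fin d) (Fin d) ℝ) :
    ‖A‖ ^ 2 = ∑ i, ∑ j, A i j ^ 2 := by
  rw [fro_norm_eq, Real.sq_sqrt (by positivity)]

lemma row_le_fro (A : Matrix (Fin d) (Fin d) ℝ) (i : Fin d) :
    ‖toE (A i)‖ ≤ ‖A‖ := by
  rw [norm_toE, fro_norm_eq]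
  apply Real.sqrt_le_sqrt
  exact Finset.single_le_sum (f := fun i => ∑ j, A i j ^ 2)
    (fun i _ => by positivity) (Finset.mem_univ i)

lemma toE_BN (Y : Matrix (Fin d) (Fin d) ℝ) (i : Fin d) :
    toE (BN Y i) = ‖toE (Y i)‖⁻¹ • toE (Y i) := by
  ext j
  show BN Y i j = _
  rw [PiLp.smul_apply, toE_apply, smul_eq_mul]
  rw [show BN Y i j = Y i j / rowNorm Y i from rfl, rowNorm_eq]
  ring

lemma BN_diff_le {X Y : Matrix (Fin d) (Fin d) ℝ} {r : ℝ} (hr : 0 < r)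
    (hX : ∀ i, r ≤ rowNorm X i) (hY : ∀ i, r ≤ rowNorm Y i) :
    ‖BN Y - BN X‖ ≤ ‖Y - X‖ / r := by
  have h2 : ‖BN Y - BN X‖ ^ 2 ≤ (‖Y - X‖ / r) ^ 2 := by
    have hrow : ∀ i, ∑ j, (BN Y - BN X) i j ^ 2 ≤ (∑ j, (Y - X) i j ^ 2) / r ^ 2 := by
      intro i
      have h1 : Real.sqrt (∑ j, (BN Y - BN X) i j ^ 2) = ‖toE (BN Y i) - toE (BN X i)‖ := by
        rw [toE_sub, norm_toE]; rfl
      have h3 := normalize_sub_norm_le hr (rowNorm_eq Y i ▸ hY i) (rowNorm_eq X i ▸ hX i)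
      rw [← toE_BN, ← toE_BN, ← h1, toE_sub, norm_toE] at h3
      have h4 := Real.sqrt_nonneg (∑ j, (BN Y - BN X) i j ^ 2)
      have h5 := pow_le_pow_left₀ h4 h3 2
      rw [Real.sq_sqrt (by positivity), div_pow, Real.sq_sqrt (by positivity)] at h5
      exact h5
    rw [fro_norm_sq, div_pow, fro_norm_sq]
    calc ∑ i, ∑ j, (BN Y - BN X) i j ^ 2 ≤ ∑ i, (∑ j, (Y - X) i j ^ 2) / r ^ 2 :=
          Finset.sum_le_sum fun i _ => hrow i
      _ = (∑ i, ∑ j, (Y - X) i j ^ 2) / r ^ 2 := by rw [Finset.sum_div]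
  calc ‖BN Y - BN X‖ = Real.sqrt (‖BN Y - BN X‖ ^ 2) := (Real.sqrt_sq (norm_nonneg _)).symm
    _ ≤ Real.sqrt ((‖Y - X‖ / r) ^ 2) := Real.sqrt_le_sqrt h2
    _ = ‖Y - X‖ / r := Real.sqrt_sq (by positivity)

lemma posdef_XXt (X : Matrix (Fin d) (Fin d) ℝ) (hX : X.det ≠ 0)
    (hsym : (X * Xᵀ).IsHermitian) : (X * Xᵀ).PosDef := by
  refine posDef_iff_dotProduct_mulVec.2 ⟨hsym, fun v hv => ?_⟩
  have hstar : star v = v := by funext j; simp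
  rw [hstar, ← mulVec_mulVec, dotProduct_mulVec, ← mulVec_transpose]
  have hw : Xᵀ *ᵥ v ≠ 0 := by
    intro h
    have hinj : Function.Injective (Xᵀ).mulVec := by
      rw [mulVec_injective_iff_isUnit, Matrix.isUnit_iff_isUnit_det, det_transpose]
      exact hX.isUnit
    exact hv (hinj (by simpa using h))
  have hz := dotProduct_self_eq_zero (R := ℝ) (v := Xᵀ *ᵥ v)
  have hnn : 0 ≤ (Xᵀ *ᵥ v) ⬝ᵥ (Xᵀ *ᵥ v) := by
    unfold dotProduct
    exact Finset.sum_nonneg fun j _ => mul_self_nonneg _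
  rcases hnn.lt_or_eq with h | h
  · exact h
  · exact absurd (hz.1 h.symm) hw

lemma lam_le_diag (A : Matrix (Fin d) (Fin d) ℝ) (hd : 0 < d) (hA : A.IsHermitian) (i : Fin d) :
    (⨅ k, hA.eigenvalues k) ≤ A i i := by
  haveI : Nonempty (Fin d) := ⟨⟨0, hd⟩⟩
  set U : Matrix (Fin d) (Fin d) ℝ := (hA.eigenvectorUnitary : Matrix (Fin d) (Fin d) ℝ)
  have hU : U * star U = 1 := (Matrix.mem_unitaryGroup_iff).mp hA.eigenvectorUnitary.2
  have hdiag : A i i = ∑ k, hA.eigenvalues k * (U i k) ^ 2 := by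
    conv_lhs => rw [hA.spectral_theorem, Unitary.conjStarAlgAut_apply]
    rw [Matrix.mul_apply]
    refine Finset.sum_congr rfl fun k _ => ?_
    rw [Matrix.mul_diagonal]
    simp [U, Matrix.star_apply]
    ring
  have hsum1 : ∑ k, (U i k) ^ 2 = 1 := by
    have h := congr_fun (congr_fun hU i) i
    rw [Matrix.mul_apply] at h
    simp only [Matrix.one_apply_eq] at h
    rw [← h]
    refine Finset.sum_congr rfl fun k _ => ?_
    rw [Matrix.star_apply]
    simp [sq]
  calc (⨅ k, hA.eigenvalues k) = (⨅ k, hA.eigenvalues k) * ∑ k, (U i k) ^ 2 := by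
        rw [hsum1, mul_one]
    _ = ∑ k, (⨅ k, hA.eigenvalues k) * (U i k) ^ 2 := by rw [Finset.mul_sum]
    _ ≤ ∑ k, hA.eigenvalues k * (U i k) ^ 2 := by
        refine Finset.sum_le_sum fun k _ => ?_
        exact mul_le_mul_of_nonneg_right (ciInf_le (Finite.bddBelow_range _) k) (sq_nonneg _)
    _ = A i i := hdiag.symm

end Aux

/-- for nonsingular `X`, the Fréchet derivative of `BN` at `X`
(operator norm w.r.t. the Frobenius norm) satisfies `‖J_BN(X)‖² ≤ 1/λ_min`,
where `λ_min` is the smallest eigenvalue of `XXᵀ`. -/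
theorem opNorm_fderiv_BN_sq_le {d : ℕ} (hd : 0 < d)
    (X : Matrix (Fin d) (Fin d) ℝ) (hX : X.det ≠ 0)
    (hsym : (X * Xᵀ).IsHermitian) :
    (@Norm.norm _ ContinuousLinearMap.hasOpNorm (fderiv ℝ (BN (d := d)) X)) ^ 2 ≤ 1 / (⨅ i, hsym.eigenvalues i) := by
  haveI : Nonempty (Fin d) := ⟨⟨0, hd⟩⟩
  have hPD : (X * Xᵀ).PosDef := posdef_XXt X hX hsym
  set lam := ⨅ i, hsym.eigenvalues i with hlamdef
  have hlam_pos : 0 < lam := by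
    obtain ⟨i, hi⟩ := exists_eq_ciInf_of_finite (f := hsym.eigenvalues)
    rw [hlamdef, ← hi]
    exact hPD.eigenvalues_pos i
  have hdiag : ∀ i, (X * Xᵀ) i i = ∑ j, X i j ^ 2 := by
    intro i
    rw [Matrix.mul_apply]
    exact Finset.sum_congr rfl fun j _ => by rw [Matrix.transpose_apply, sq]
  have hrow_lam : ∀ i, Real.sqrt lam ≤ rowNorm X i := by
    intro i
    exact Real.sqrt_le_sqrt ((lam_le_diag (X * Xᵀ) hd hsym i).trans_eq (hdiag i))
  have hs_pos : 0 < Real.sqrt lam := Real.sqrt_pos.2 hlam_pos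
  have key : ∀ r : ℝ, 0 < r → r < Real.sqrt lam → (@Norm.norm _ ContinuousLinearMap.hasOpNorm (fderiv ℝ (BN (d := d)) X)) ≤ 1 / r := by
    intro r hr hrs
    refine norm_fderiv_le_of_lip' ℝ (by positivity) ?_
    have hball : Metric.ball X (Real.sqrt lam - r) ∈ nhds X :=
      Metric.ball_mem_nhds _ (by linarith)
    filter_upwards [hball] with Y hY
    have hXY : ‖Y - X‖ < Real.sqrt lam - r := by
      rw [← dist_eq_norm]
      exact Metric.mem_ball.1 hY
    have hYrow : ∀ i, r ≤ rowNorm Y i := by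
      intro i
      have h1 : ‖toE (X i)‖ - ‖toE (Y i)‖ ≤ ‖toE (X i) - toE (Y i)‖ :=
        norm_sub_norm_le _ _
      have h2 : ‖toE (X i) - toE (Y i)‖ ≤ ‖X - Y‖ := by
        rw [toE_sub]
        exact row_le_fro (X - Y) i
      have h3 : ‖X - Y‖ = ‖Y - X‖ := norm_sub_rev _ _
      have h4 := hrow_lam i
      rw [rowNorm_eq] at h4 ⊢
      linarith
    have hXrow : ∀ i, r ≤ rowNorm X i := fun i => (hrs.trans_le (hrow_lam i)).le
    have hmain := BN_diff_le hr hXrow hYrow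
    calc ‖BN Y - BN X‖ ≤ ‖Y - X‖ / r := hmain
      _ = 1 / r * ‖Y - X‖ := by ring
  have hle : (@Norm.norm _ ContinuousLinearMap.hasOpNorm (fderiv ℝ (BN (d := d)) X)) ≤ 1 / Real.sqrt lam := by
    by_contra hcon
    push_neg at hcon
    set N := (@Norm.norm _ ContinuousLinearMap.hasOpNorm (fderiv ℝ (BN (d := d)) X)) with hNdef
    have hNpos : 0 < N := lt_trans (by positivity) hcon
    have h1 : 1 / N < Real.sqrt lam := by
      rw [div_lt_iff₀ hNpos]
      rw [div_lt_iff₀ hs_pos] at hcon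
      nlinarith
    set r := (1 / N + Real.sqrt lam) / 2 with hrdef
    have hN1 : 0 < 1 / N := by positivity
    have hr0 : 0 < r := by positivity
    have hrlt : r < Real.sqrt lam := by rw [hrdef]; linarith
    have hgt : 1 / N < r := by rw [hrdef]; linarith
    have h2 := key r hr0 hrlt
    have h3 : 1 / r < N := by
      have := one_div_lt_one_div_of_lt hN1 hgt
      rwa [one_div_one_div] at this
    linarith
  have h2 := pow_le_pow_left₀ (ContinuousLinearMap.opNorm_nonneg _) hle 2
  rwa [div_pow, one_pow, Real.sq_sqrt hlam_pos.le] at h2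
end

section
/- Let X ∈ ℝ^{d×d} be nonsingular with Tr(XᵀX) = d, and let λ_d denote the smallest eigenvalue of XᵀX. Then −log λ_d ≤ d·φ(X) + 1. Moreover, if φ(X) ≤ 1/(16d), then −log λ_d ≤ 2·√(d·φ(X)). -/
open MeasureTheory Matrix

attribute [local instance] Matrix.frobeniusNormedAddCommGroup Matrix.frobeniusNormedSpace

/-- Quartic lower bound for `exp (-t)` when `0 ≤ t ≤ 1`. -/
lemma exp_neg_quartic_lb {t : ℝ} (ht : 0 ≤ t) (ht1 : t ≤ 1) :
    1 - t + t ^ 2 / 2 - t ^ 3 / 6 - 5 * t ^ 4 / 96 ≤ Real.exp (-t) := by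
  have habs : |(-t)| ≤ 1 := by rw [abs_neg, abs_of_nonneg ht]; exact ht1
  have hb := Real.exp_bound habs (n := 4) (by norm_num)
  rw [abs_neg, abs_of_nonneg ht] at hb
  have hsum : ∑ m ∈ Finset.range 4, (-t) ^ m / (m.factorial : ℝ)
      = 1 - t + t ^ 2 / 2 - t ^ 3 / 6 := by
    simp [Finset.sum_range_succ, Nat.factorial]
    ring
  rw [hsum] at hb
  have := abs_le.mp hb
  have h1 := this.1
  norm_num [Nat.factorial] at h1 ⊢
  linarith

/-- The key scalar estimate. -/
lemma key_real (m s : ℝ) (hm : 0 < m) (hm1 : m ≤ 1) (h : m - 1 - Real.log m ≤ s) :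
    - Real.log m ≤ s + 1 ∧ (s ≤ 1 / 16 → - Real.log m ≤ 2 * Real.sqrt s) := by
  have hlog : Real.log m ≤ m - 1 := Real.log_le_sub_one_of_pos hm
  have hs : 0 ≤ s := by linarith
  constructor
  · linarith
  intro hs16
  set t := - Real.log m with htdef
  have ht : 0 ≤ t := by
    have : Real.log m ≤ 0 := Real.log_nonpos (le_of_lt hm) hm1
    linarith
  have hmexp : m = Real.exp (-t) := by
    rw [htdef, neg_neg, Real.exp_log hm]
  have hg : Real.exp (-t) - 1 + t ≤ s := by rw [← hmexp]; linarith
  have ht1 : t ≤ 1 := by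
    by_contra hc
    push_neg at hc
    have h17 : t ≤ 17 / 16 := by
      have := (Real.exp_pos (-t)).le
      linarith
    have he : Real.exp (-(17/16 : ℝ)) ≤ Real.exp (-t) := by
      apply Real.exp_le_exp.mpr; linarith
    have hlt : Real.exp (17/16 : ℝ) < 16 := by
      calc Real.exp (17/16 : ℝ) ≤ Real.exp 2 := by
            apply Real.exp_le_exp.mpr; norm_num
        _ = Real.exp 1 * Real.exp 1 := by rw [← Real.exp_add]; norm_num
        _ < 2.7182818286 * 2.7182818286 := by
            have := Real.exp_one_lt_d9
            nlinarith [Real.exp_pos 1]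
        _ < 16 := by norm_num
    have hinv : (1 : ℝ) / 16 < Real.exp (-(17/16 : ℝ)) := by
      rw [Real.exp_neg, show (1:ℝ)/16 = 16⁻¹ by norm_num]
      exact inv_strictAnti₀ (Real.exp_pos _) hlt
    linarith
  have hcub := exp_neg_quartic_lb ht ht1
  have hkey : t ^ 2 / 2 - t ^ 3 / 6 - 5 * t ^ 4 / 96 ≤ s := by linarith
  have ht12 : t ≤ 1 / 2 := by
    nlinarith [sq_nonneg (t - 1/2), mul_nonneg (sq_nonneg (t - 1/2)) (sub_nonneg.mpr ht1),
      sq_nonneg ((t - 1/2) * (1 - t)), mul_nonneg (mul_nonneg ht ht) (sub_nonneg.mpr ht1),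
      mul_nonneg ht (sub_nonneg.mpr ht1)]
  have hcoef : (0:ℝ) ≤ 1/4 - t/6 - 5*t^2/96 := by nlinarith [sq_nonneg t]
  have ht4 : t ^ 2 ≤ 4 * s := by
    nlinarith [mul_nonneg (sq_nonneg t) hcoef]
  have h2s := Real.sqrt_nonneg s
  nlinarith [Real.sq_sqrt hs]

/-- for nonsingular `X` with `Tr(XᵀX) = d` and `λ_d` the smallest
eigenvalue of `XᵀX`, one has `−log λ_d ≤ d·φ(X) + 1`; moreover if `φ(X) ≤ 1/(16d)`
then `−log λ_d ≤ 2√(d·φ(X))`. -/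
theorem neg_log_min_eigenvalue_le {d : ℕ} (hd : 0 < d)
    (X : Matrix (Fin d) (Fin d) ℝ) (hX : X.det ≠ 0)
    (htr : (Xᵀ * X).trace = (d : ℝ))
    (hsym : (Xᵀ * X).IsHermitian) :
    - Real.log (⨅ i, hsym.eigenvalues i) ≤ d * isoGap X + 1 ∧
      (isoGap X ≤ 1 / (16 * d) →
        - Real.log (⨅ i, hsym.eigenvalues i) ≤ 2 * Real.sqrt (d * isoGap X)) := by
  haveI : Nonempty (Fin d) := Fin.pos_iff_nonempty.mp hd
  set lam := hsym.eigenvalues with hlam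
  have hpsd : (Xᵀ * X).PosSemidef := by
    rw [← Matrix.conjTranspose_eq_transpose_of_trivial]
    exact Matrix.posSemidef_conjTranspose_mul_self X
  have hnn : ∀ i, 0 ≤ lam i := fun i => hpsd.eigenvalues_nonneg i
  have hdet : (Xᵀ * X).det = ∏ i, lam i := by
    simpa using hsym.det_eq_prod_eigenvalues
  have hdetpos : 0 < (Xᵀ * X).det := by
    rw [Matrix.det_mul, Matrix.det_transpose]
    exact mul_self_pos.mpr hX
  have hprodpos : 0 < ∏ i, lam i := hdet ▸ hdetpos
  have hpos : ∀ i, 0 < lam i := by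
    intro i
    rcases (hnn i).lt_or_eq with h | h
    · exact h
    · exfalso
      have : ∏ j, lam j = 0 := Finset.prod_eq_zero (Finset.mem_univ i) h.symm
      exact hprodpos.ne' this
  have hsum : ∑ i, lam i = (d : ℝ) := by
    have h1 : (Xᵀ * X).trace = (Matrix.diagonal (RCLike.ofReal ∘ lam)).trace := by
      conv_lhs => rw [hsym.spectral_theorem]
      rw [Unitary.conjStarAlgAut_apply]
      rw [Matrix.trace_mul_cycle]
      rw [(Matrix.mem_unitaryGroup_iff').mp (Matrix.IsHermitian.eigenvectorUnitary hsym).2]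
      rw [Matrix.one_mul]
    rw [htr, Matrix.trace_diagonal] at h1
    simpa using h1.symm
  have hiso : (d : ℝ) * isoGap X = ∑ i, (- Real.log (lam i)) := by
    have hd0 : (d : ℝ) ≠ 0 := Nat.cast_ne_zero.mpr hd.ne'
    have h2 : ((1 : ℝ) / d) * (Xᵀ * X).trace = 1 := by
      rw [htr]; field_simp
    rw [isoGap, h2, div_one, hdet, Real.log_rpow hprodpos,
      Real.log_prod (fun i _ => (hpos i).ne')]
    rw [Finset.sum_neg_distrib]
    field_simp
  obtain ⟨i0, hi0⟩ := Finite.exists_min lam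
  have hmin : (⨅ i, lam i) = lam i0 :=
    le_antisymm (ciInf_le (Finite.bddBelow_range _) i0) (le_ciInf hi0)
  set m := lam i0 with hm
  have hm0 : 0 < m := hpos i0
  have hm1 : m ≤ 1 := by
    have h3 : (d : ℝ) * m ≤ ∑ i, lam i := by
      calc (d : ℝ) * m = ∑ _i : Fin d, m := by
            rw [Finset.sum_const, Finset.card_univ, Fintype.card_fin, nsmul_eq_mul]
        _ ≤ ∑ i, lam i := Finset.sum_le_sum (fun i _ => hi0 i)
    rw [hsum] at h3
    have hd0 : (0:ℝ) < d := Nat.cast_pos.mpr hd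
    nlinarith
  have hineq : m - 1 - Real.log m ≤ (d : ℝ) * isoGap X := by
    rw [hiso]
    have hsplit : ∑ i, (- Real.log (lam i))
        = - Real.log m + ∑ i ∈ Finset.univ.erase i0, (- Real.log (lam i)) :=
      (Finset.add_sum_erase _ _ (Finset.mem_univ i0)).symm
    have hterm : ∀ i ∈ Finset.univ.erase i0, 1 - lam i ≤ - Real.log (lam i) := by
      intro i _
      have := Real.log_le_sub_one_of_pos (hpos i)
      linarith
    have hsum2 : ∑ i ∈ Finset.univ.erase i0, (1 - lam i)
        ≤ ∑ i ∈ Finset.univ.erase i0, (- Real.log (lam i)) :=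
      Finset.sum_le_sum hterm
    have hcard : ((Finset.univ.erase i0).card : ℝ) = (d : ℝ) - 1 := by
      rw [Finset.card_erase_of_mem (Finset.mem_univ i0), Finset.card_univ, Fintype.card_fin]
      have : 1 ≤ d := hd
      push_cast [Nat.cast_sub this]
      ring
    have herase : ∑ i ∈ Finset.univ.erase i0, lam i = (d : ℝ) - m := by
      have := Finset.add_sum_erase Finset.univ lam (Finset.mem_univ i0)
      rw [hsum] at this
      linarith [this]
    have hval : ∑ i ∈ Finset.univ.erase i0, (1 - lam i) = ((d:ℝ) - 1) - ((d:ℝ) - m) := by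
      rw [Finset.sum_sub_distrib, Finset.sum_const, nsmul_eq_mul, mul_one, hcard, herase]
    rw [hsplit]
    rw [hval] at hsum2
    linarith
  obtain ⟨h1, h2⟩ := key_real m ((d : ℝ) * isoGap X) hm0 hm1 hineq
  rw [hmin]
  refine ⟨h1, fun hgap => ?_⟩
  apply h2
  have hd0 : (0:ℝ) < d := Nat.cast_pos.mpr hd
  calc (d : ℝ) * isoGap X ≤ (d : ℝ) * (1 / (16 * d)) :=
        mul_le_mul_of_nonneg_left hgap hd0.le
    _ = 1 / 16 := by field_simp
end

section
/- Let d ≥ 2, let X ∈ ℝ^{d×d} be nonsingular with all rows of unit Euclidean norm, let λ_1, …, λ_d be the eigenvalues of XXᵀ, and let W be Haar-distributed on the orthogonal group O(d). Set X' = WX. Then E[ ( Σ_{j=1}^d ‖X'_{j·}‖ )² ] ≤ d² − Σ_{k=1}^d (λ_k − 1)² / (2(d+2)). -/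
open MeasureTheory Matrix

/-- Givens rotation in coordinates `a, b`. -/
noncomputable def givens {d : ℕ} (a b : Fin d) (c s : ℝ) : Matrix (Fin d) (Fin d) ℝ :=
  Matrix.of fun x y =>
    if x = a then (if y = a then c else if y = b then s else 0)
    else if x = b then (if y = a then -s else if y = b then c else 0)
    else if x = y then 1 else 0

section givens
variable {d : ℕ} (a b : Fin d) (c s : ℝ)

lemma sum_mul_pair (f : Fin d → ℝ) (hab : a ≠ b) (p q : ℝ) :
    ∑ z, f z * ((if z = a then p else 0) + (if z = b then q else 0)) = f a * p + f b * q := by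
  simp [mul_add, Finset.sum_add_distrib, mul_ite, mul_zero, Finset.sum_ite_eq']

lemma sum_mul_single (f : Fin d → ℝ) (y : Fin d) :
    ∑ z, f z * (if z = y then 1 else 0) = f y := by
  simp [mul_ite, mul_zero, Finset.sum_ite_eq']

lemma givens_col_a (hab : a ≠ b) (z : Fin d) :
    givens a b c s z a = (if z = a then c else 0) + (if z = b then -s else 0) := by
  unfold givens
  simp only [Matrix.of_apply]
  split_ifs <;> simp_all

lemma givens_col_b (hab : a ≠ b) (z : Fin d) :
    givens a b c s z b = (if z = a then s else 0) + (if z = b then c else 0) := by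
  unfold givens
  simp only [Matrix.of_apply]
  split_ifs <;> simp_all

lemma givens_col_other {y : Fin d} (hya : y ≠ a) (hyb : y ≠ b) (z : Fin d) :
    givens a b c s z y = (if z = y then 1 else 0) := by
  unfold givens
  simp only [Matrix.of_apply]
  split_ifs <;> simp_all <;> tauto

lemma givens_orth (hab : a ≠ b) (hcs : c ^ 2 + s ^ 2 = 1) :
    (givens a b c s)ᵀ * givens a b c s = 1 := by
  have hba : b ≠ a := hab.symm
  ext x y
  simp only [Matrix.mul_apply, Matrix.transpose_apply]
  rcases eq_or_ne y a with hya | hya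
  · rw [hya]
    simp only [givens_col_a a b c s hab]
    rw [sum_mul_pair a b _ hab]
    rcases eq_or_ne x a with hxa | hxa
    · rw [hxa]
      simp only [givens_col_a a b c s hab]
      simp [hab, hba, Matrix.one_apply]
      nlinarith
    · rcases eq_or_ne x b with hxb | hxb
      · rw [hxb]
        simp only [givens_col_b a b c s hab]
        simp [hab, hba, Matrix.one_apply]
        ring
      · simp only [givens_col_other a b c s hxa hxb]
        simp [hab, hba, hxa, hxb, Matrix.one_apply, Ne.symm hxa, Ne.symm hxb]
  · rcases eq_or_ne y b with hyb | hyb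
    · rw [hyb]
      simp only [givens_col_b a b c s hab]
      rw [sum_mul_pair a b _ hab]
      rcases eq_or_ne x a with hxa | hxa
      · rw [hxa]
        simp only [givens_col_a a b c s hab]
        simp [hab, hba, Matrix.one_apply]
        ring
      · rcases eq_or_ne x b with hxb | hxb
        · rw [hxb]
          simp only [givens_col_b a b c s hab]
          simp [hab, hba, Matrix.one_apply]
          nlinarith
        · simp only [givens_col_other a b c s hxa hxb]
          simp [hab, hba, hxa, hxb, Matrix.one_apply, Ne.symm hxa, Ne.symm hxb]
    · simp only [givens_col_other a b c s hya hyb]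
      rw [sum_mul_single]
      rcases eq_or_ne x a with hxa | hxa
      · rw [hxa]
        rw [givens_col_a a b c s hab]
        simp [hya, hyb, Ne.symm hya, Ne.symm hyb, Matrix.one_apply, fun h : a = y => hya h.symm]
      · rcases eq_or_ne x b with hxb | hxb
        · rw [hxb]
          rw [givens_col_b a b c s hab]
          simp [hya, hyb, Ne.symm hya, Ne.symm hyb, Matrix.one_apply, fun h : b = y => hyb h.symm]
        · rw [givens_col_other a b c s hxa hxb]
          simp [Matrix.one_apply, eq_comm]

lemma mul_givens_apply_left (hab : a ≠ b) (W : Matrix (Fin d) (Fin d) ℝ) (i : Fin d) :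
    (W * givens a b c s) i a = c * W i a - s * W i b := by
  simp only [Matrix.mul_apply, givens_col_a a b c s hab]
  rw [sum_mul_pair a b _ hab]; ring

lemma mul_givens_apply_right (hab : a ≠ b) (W : Matrix (Fin d) (Fin d) ℝ) (i : Fin d) :
    (W * givens a b c s) i b = s * W i a + c * W i b := by
  simp only [Matrix.mul_apply, givens_col_b a b c s hab]
  rw [sum_mul_pair a b _ hab]; ring

end givens

section transfer

variable {d : ℕ} {μ : Measure (Matrix (Fin d) (Fin d) ℝ)}

lemma measurable_entry (i a : Fin d) : Measurable fun W : Matrix (Fin d) (Fin d) ℝ => W i a :=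
  (measurable_pi_apply a).comp (measurable_pi_apply i)

lemma measurable_mul_right (V : Matrix (Fin d) (Fin d) ℝ) :
    Measurable fun W : Matrix (Fin d) (Fin d) ℝ => W * V := by
  apply measurable_pi_lambda
  intro i
  apply measurable_pi_lambda
  intro j
  simp only [Matrix.mul_apply]
  exact Finset.measurable_sum _ fun k _ => (measurable_entry i k).mul_const _

/-- transfer of integrals along right multiplication by an orthogonal matrix -/
lemma integral_mul_right_eq (hμ : IsHaarOrthogonal μ) {V : Matrix (Fin d) (Fin d) ℝ}
    (hV : Vᵀ * V = 1) (f : Matrix (Fin d) (Fin d) ℝ → ℝ) (hf : AEStronglyMeasurable f μ) :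
    ∫ W, f (W * V) ∂μ = ∫ W, f W ∂μ := by
  have hmap := (hμ.2.2 V hV).2
  have hg : AEMeasurable (fun W => W * V) μ := (measurable_mul_right V).aemeasurable
  have hf' : AEStronglyMeasurable f (μ.map fun W => W * V) := by rw [hmap]; exact hf
  rw [← integral_map hg hf', hmap]

/-- a.e., rows of W are unit vectors -/
lemma ae_row_norm (hμ : IsHaarOrthogonal μ) :
    ∀ᵐ W ∂μ, ∀ i : Fin d, ∑ a, (W i a) ^ 2 = 1 := by
  filter_upwards [hμ.2.1] with W hW i
  have h1 : W * Wᵀ = 1 := mul_eq_one_comm.mp hW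
  have := congrFun (congrFun h1 i) i
  simp only [Matrix.mul_apply, Matrix.transpose_apply] at this
  rw [Matrix.one_apply_eq] at this
  calc ∑ a, (W i a) ^ 2 = ∑ a, W i a * W i a := by simp [sq]
  _ = 1 := this

lemma integrable_of_bound [IsProbabilityMeasure μ] (f : Matrix (Fin d) (Fin d) ℝ → ℝ)
    (hf : Measurable f) (C : ℝ) (h : ∀ᵐ W ∂μ, |f W| ≤ C) : Integrable f μ :=
  (integrable_const C).mono' hf.aestronglyMeasurable (by simpa using h)

end transfer

section moments

variable {d : ℕ} {μ : Measure (Matrix (Fin d) (Fin d) ℝ)} (hμ : IsHaarOrthogonal μ)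

-- entry bound
lemma ae_entry_sq_le (hμ : IsHaarOrthogonal μ) :
    ∀ᵐ W ∂μ, ∀ i a : Fin d, (W i a) ^ 2 ≤ 1 := by
  filter_upwards [ae_row_norm hμ] with W hW i a
  have := hW i
  have h0 : ∀ b ∈ Finset.univ, (0:ℝ) ≤ (W i b) ^ 2 := fun b _ => sq_nonneg _
  calc (W i a) ^ 2 ≤ ∑ b, (W i b) ^ 2 :=
        Finset.single_le_sum h0 (Finset.mem_univ a)
  _ = 1 := this

lemma integrable_sq (i a : Fin d) : IsHaarOrthogonal μ →
    Integrable (fun W => (W i a) ^ 2) μ := fun hμ => by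
  have : IsProbabilityMeasure μ := hμ.1
  refine integrable_of_bound _ ((measurable_entry i a).pow_const 2) 1 ?_
  filter_upwards [ae_entry_sq_le hμ] with W h
  rw [abs_of_nonneg (sq_nonneg _)]; exact h i a

lemma integrable_pow4 (i a : Fin d) : IsHaarOrthogonal μ →
    Integrable (fun W => (W i a) ^ 4) μ := fun hμ => by
  have : IsProbabilityMeasure μ := hμ.1
  refine integrable_of_bound _ ((measurable_entry i a).pow_const 4) 1 ?_
  filter_upwards [ae_entry_sq_le hμ] with W h
  have := h i a
  have h4 : (W i a) ^ 4 = ((W i a) ^ 2) ^ 2 := by ring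
  rw [abs_of_nonneg (by positivity), h4]
  nlinarith [sq_nonneg (W i a)]

lemma integrable_sq_sq (i a b : Fin d) : IsHaarOrthogonal μ →
    Integrable (fun W => (W i a) ^ 2 * (W i b) ^ 2) μ := fun hμ => by
  have : IsProbabilityMeasure μ := hμ.1
  refine integrable_of_bound _
    (((measurable_entry i a).pow_const 2).mul ((measurable_entry i b).pow_const 2)) 1 ?_
  filter_upwards [ae_entry_sq_le hμ] with W h
  have ha := h i a; have hb := h i b
  rw [abs_of_nonneg (by positivity)]
  nlinarith [sq_nonneg (W i a), sq_nonneg (W i b)]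

/-- second moments are constant along a row -/
lemma sq_moment_const (hμ : IsHaarOrthogonal μ) (i a b : Fin d) (hab : a ≠ b) :
    ∫ W, (W i a) ^ 2 ∂μ = ∫ W, (W i b) ^ 2 ∂μ := by
  have h := integral_mul_right_eq hμ (givens_orth a b 0 1 hab (by norm_num))
    (fun W => (W i b) ^ 2) ((measurable_entry i b).pow_const 2).aestronglyMeasurable
  rw [← h]
  apply integral_congr_ae
  apply Filter.Eventually.of_forall
  intro W
  simp only
  rw [mul_givens_apply_right a b 0 1 hab W i]
  ring

lemma pow4_moment_const (hμ : IsHaarOrthogonal μ) (i a b : Fin d) (hab : a ≠ b) :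
    ∫ W, (W i a) ^ 4 ∂μ = ∫ W, (W i b) ^ 4 ∂μ := by
  have h := integral_mul_right_eq hμ (givens_orth a b 0 1 hab (by norm_num))
    (fun W => (W i b) ^ 4) ((measurable_entry i b).pow_const 4).aestronglyMeasurable
  rw [← h]
  apply integral_congr_ae
  apply Filter.Eventually.of_forall
  intro W
  simp only
  rw [mul_givens_apply_right a b 0 1 hab W i]
  ring

/-- the second moment of each entry is `1/d` -/
lemma sq_moment (hμ : IsHaarOrthogonal μ) (i a : Fin d) (hd : 1 ≤ d) :
    ∫ W, (W i a) ^ 2 ∂μ = 1 / d := by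
  have : IsProbabilityMeasure μ := hμ.1
  have hsum : ∑ b, ∫ W, (W i b) ^ 2 ∂μ = 1 := by
    rw [← integral_finset_sum _ (fun b _ => integrable_sq i b hμ)]
    rw [integral_congr_ae (g := fun _ => (1:ℝ))]
    · simp
    · filter_upwards [ae_row_norm hμ] with W hW using hW i
  have hconst : ∀ b, ∫ W, (W i b) ^ 2 ∂μ = ∫ W, (W i a) ^ 2 ∂μ := by
    intro b
    rcases eq_or_ne b a with rfl | h
    · rfl
    · exact sq_moment_const hμ i b a h
  rw [Finset.sum_congr rfl (fun b _ => hconst b)] at hsum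
  simp only [Finset.sum_const, Finset.card_univ, Fintype.card_fin, nsmul_eq_mul] at hsum
  have hd0 : (d:ℝ) ≠ 0 := Nat.cast_ne_zero.mpr (by omega)
  field_simp at hsum ⊢
  linarith [hsum]

end moments


section moments2

variable {d : ℕ} {μ : Measure (Matrix (Fin d) (Fin d) ℝ)}

/-- cross moment in terms of fourth moment, via a 45 degree rotation -/
lemma sqsq_eq_third_pow4 (hμ : IsHaarOrthogonal μ) (i a b : Fin d) (hab : a ≠ b) :
    ∫ W, (W i a) ^ 2 * (W i b) ^ 2 ∂μ = (1/3) * ∫ W, (W i a) ^ 4 ∂μ := by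
  have : IsProbabilityMeasure μ := hμ.1
  set c : ℝ := Real.sqrt (1/2) with hcdef
  have hc : c ^ 2 = 1/2 := Real.sq_sqrt (by norm_num)
  have hc4 : c ^ 4 = 1/4 := by
    have : c ^ 4 = (c ^ 2) ^ 2 := by ring
    rw [this, hc]; norm_num
  have hV := givens_orth a b c c hab (by rw [hc]; norm_num)
  have hfmeas : Measurable fun W : Matrix (Fin d) (Fin d) ℝ => (W i a) ^ 4 + (W i b) ^ 4 :=
    ((measurable_entry i a).pow_const 4).add ((measurable_entry i b).pow_const 4)
  have h := integral_mul_right_eq hμ hV _ hfmeas.aestronglyMeasurable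
  have hpt : ∀ W : Matrix (Fin d) (Fin d) ℝ,
      (fun W => (W i a) ^ 4 + (W i b) ^ 4) (W * givens a b c c) =
      (1/2) * ((W i a) ^ 4 + (W i b) ^ 4) + 3 * ((W i a) ^ 2 * (W i b) ^ 2) := by
    intro W
    simp only
    rw [mul_givens_apply_left a b c c hab W i, mul_givens_apply_right a b c c hab W i]
    linear_combination ((W i a - W i b) ^ 4 + (W i a + W i b) ^ 4) * hc4
  rw [integral_congr_ae (Filter.Eventually.of_forall hpt)] at h
  have hint4a := integrable_pow4 i a hμ
  have hint4b := integrable_pow4 i b hμ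
  have hintab := integrable_sq_sq i a b hμ
  have hfg : Integrable (fun W : Matrix (Fin d) (Fin d) ℝ => (W i a) ^ 4 + (W i b) ^ 4) μ :=
    hint4a.add hint4b
  have hfg2 : Integrable (fun W : Matrix (Fin d) (Fin d) ℝ =>
      (1:ℝ)/2 * ((W i a) ^ 4 + (W i b) ^ 4)) μ := hfg.const_mul _
  have hfg3 : Integrable (fun W : Matrix (Fin d) (Fin d) ℝ =>
      (3:ℝ) * ((W i a) ^ 2 * (W i b) ^ 2)) μ := hintab.const_mul _
  rw [integral_add hfg2 hfg3, integral_const_mul, integral_const_mul,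
    integral_add hint4a hint4b] at h
  have h4eq : ∫ W, (W i b) ^ 4 ∂μ = ∫ W, (W i a) ^ 4 ∂μ := pow4_moment_const hμ i b a hab.symm
  rw [h4eq] at h
  linarith

/-- the fourth moment of each entry is `3/(d(d+2))` -/
lemma pow4_moment (hμ : IsHaarOrthogonal μ) (hd : 1 ≤ d) (i a : Fin d) :
    ∫ W, (W i a) ^ 4 ∂μ = 3 / ((d:ℝ) * ((d:ℝ) + 2)) := by
  have : IsProbabilityMeasure μ := hμ.1
  have hsum : ∑ b, ∫ W, (W i a) ^ 2 * (W i b) ^ 2 ∂μ = 1 / d := by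
    rw [← integral_finset_sum _ (fun b _ => integrable_sq_sq i a b hμ)]
    rw [show (1:ℝ)/d = ∫ W, (W i a)^2 ∂μ from (sq_moment hμ i a hd).symm]
    apply integral_congr_ae
    filter_upwards [ae_row_norm hμ] with W hW
    rw [← Finset.mul_sum, hW i, mul_one]
  rw [← Finset.sum_erase_add _ _ (Finset.mem_univ a)] at hsum
  have hsame : ∫ W, (W i a) ^ 2 * (W i a) ^ 2 ∂μ = ∫ W, (W i a) ^ 4 ∂μ := by
    apply integral_congr_ae; apply Filter.Eventually.of_forall; intro W; simp only; ring_nf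
  rw [hsame] at hsum
  have hoff : ∀ b ∈ Finset.univ.erase a, ∫ W, (W i a) ^ 2 * (W i b) ^ 2 ∂μ
      = (1/3) * ∫ W, (W i a) ^ 4 ∂μ := by
    intro b hb
    exact sqsq_eq_third_pow4 hμ i a b (Finset.ne_of_mem_erase hb).symm
  rw [Finset.sum_congr rfl hoff, Finset.sum_const, Finset.card_erase_of_mem (Finset.mem_univ a),
    Finset.card_univ, Fintype.card_fin, nsmul_eq_mul] at hsum
  have hd0 : (d:ℝ) ≠ 0 := Nat.cast_ne_zero.mpr (by omega)
  have hd1 : (1:ℝ) ≤ (d:ℝ) := by exact_mod_cast hd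
  have hcast : ((d - 1 : ℕ) : ℝ) = (d:ℝ) - 1 := by
    have : 1 ≤ d := hd
    push_cast [this]; ring
  rw [hcast] at hsum
  have hd2 : (d:ℝ) * ((d:ℝ) + 2) ≠ 0 := by positivity
  field_simp at hsum ⊢
  nlinarith [hsum]

lemma sqsq_moment (hμ : IsHaarOrthogonal μ) (hd : 1 ≤ d) (i a b : Fin d) (hab : a ≠ b) :
    ∫ W, (W i a) ^ 2 * (W i b) ^ 2 ∂μ = 1 / ((d:ℝ) * ((d:ℝ) + 2)) := by
  rw [sqsq_eq_third_pow4 hμ i a b hab, pow4_moment hμ hd i a]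
  ring

/-- moment of a diagonal quadratic form in one row -/
lemma qform_moment (hμ : IsHaarOrthogonal μ) (hd : 1 ≤ d) (i : Fin d) (lam : Fin d → ℝ) :
    ∫ W, (∑ a, lam a * (W i a) ^ 2) ^ 2 ∂μ
      = ((∑ a, lam a) ^ 2 + 2 * ∑ a, (lam a) ^ 2) / ((d:ℝ) * ((d:ℝ) + 2)) := by
  have : IsProbabilityMeasure μ := hμ.1
  have hpt : ∀ W : Matrix (Fin d) (Fin d) ℝ, (∑ a, lam a * (W i a) ^ 2) ^ 2
      = ∑ a, ∑ b, (lam a * lam b) * ((W i a) ^ 2 * (W i b) ^ 2) := by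
    intro W
    rw [sq, Finset.sum_mul_sum]
    exact Finset.sum_congr rfl fun a _ => Finset.sum_congr rfl fun b _ => by ring
  rw [integral_congr_ae (Filter.Eventually.of_forall hpt)]
  rw [integral_finset_sum _ (fun a _ => integrable_finset_sum _
    (fun b _ => (integrable_sq_sq i a b hμ).const_mul _))]
  have : ∀ a, ∫ W, ∑ b, (lam a * lam b) * ((W i a) ^ 2 * (W i b) ^ 2) ∂μ
      = ∑ b, (lam a * lam b) * ∫ W, (W i a) ^ 2 * (W i b) ^ 2 ∂μ := by
    intro a
    rw [integral_finset_sum _ (fun b _ => (integrable_sq_sq i a b hμ).const_mul _)]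
    exact Finset.sum_congr rfl fun b _ => integral_const_mul _ _
  rw [Finset.sum_congr rfl fun a _ => this a]
  have hval : ∀ a b : Fin d, ∫ W, (W i a) ^ 2 * (W i b) ^ 2 ∂μ
      = 1 / ((d:ℝ) * ((d:ℝ)+2)) + (if b = a then 2 / ((d:ℝ) * ((d:ℝ)+2)) else 0) := by
    intro a b
    rcases eq_or_ne b a with rfl | h
    · rw [if_pos rfl]
      have := pow4_moment hμ hd i b
      have hsame : ∫ W, (W i b) ^ 2 * (W i b) ^ 2 ∂μ = ∫ W, (W i b) ^ 4 ∂μ := by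
        apply integral_congr_ae; apply Filter.Eventually.of_forall; intro W; simp only; ring_nf
      rw [hsame, this]; ring
    · rw [if_neg h, sqsq_moment hμ hd i a b (Ne.symm h), add_zero]
  have hrw : ∀ a, ∑ b, (lam a * lam b) * ∫ W, (W i a) ^ 2 * (W i b) ^ 2 ∂μ
      = (∑ b, (lam a * lam b)) * (1 / ((d:ℝ) * ((d:ℝ)+2))) + (lam a)^2 * (2 / ((d:ℝ) * ((d:ℝ)+2))) := by
    intro a
    rw [Finset.sum_congr rfl fun b _ => by rw [hval a b]]
    rw [show ∀ f : Fin d → ℝ, (∑ b, f b) = ∑ b, f b from fun _ => rfl]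
    have : ∑ b, (lam a * lam b) * (1 / ((d:ℝ) * ((d:ℝ)+2)) + if b = a then 2 / ((d:ℝ) * ((d:ℝ)+2)) else 0)
        = ∑ b, ((lam a * lam b) * (1 / ((d:ℝ) * ((d:ℝ)+2)))
            + (if b = a then (lam a * lam b) * (2 / ((d:ℝ) * ((d:ℝ)+2))) else 0)) := by
      apply Finset.sum_congr rfl
      intro b _
      split_ifs <;> ring
    rw [this, Finset.sum_add_distrib, Finset.sum_ite_eq' Finset.univ a
      (fun b => (lam a * lam b) * (2 / ((d:ℝ) * ((d:ℝ)+2))))]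
    simp only [Finset.mem_univ, if_true, ← Finset.sum_mul]
    ring
  rw [Finset.sum_congr rfl fun a _ => hrw a]
  rw [Finset.sum_add_distrib, ← Finset.sum_mul, ← Finset.sum_mul, ← Finset.sum_mul_sum]
  rw [← sq]
  field_simp
end moments2

section spectral

variable {d : ℕ}

lemma real_spectral (X : Matrix (Fin d) (Fin d) ℝ) (hsym : (X * Xᵀ).IsHermitian) :
    ∃ V : Matrix (Fin d) (Fin d) ℝ, Vᵀ * V = 1 ∧ V * Vᵀ = 1 ∧
      X * Xᵀ = V * Matrix.diagonal hsym.eigenvalues * Vᵀ := by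
  refine ⟨(hsym.eigenvectorUnitary : Matrix (Fin d) (Fin d) ℝ), ?_, ?_, ?_⟩
  · have h := ((Matrix.mem_unitaryGroup_iff').mp (hsym.eigenvectorUnitary).2)
    rwa [Matrix.star_eq_conjTranspose, Matrix.conjTranspose_eq_transpose_of_trivial] at h
  · have h := ((Matrix.mem_unitaryGroup_iff).mp (hsym.eigenvectorUnitary).2)
    rwa [Matrix.star_eq_conjTranspose, Matrix.conjTranspose_eq_transpose_of_trivial] at h
  · have h := hsym.spectral_theorem
    rwa [Unitary.conjStarAlgAut_apply, Matrix.star_eq_conjTranspose,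
      Matrix.conjTranspose_eq_transpose_of_trivial,
      show RCLike.ofReal ∘ hsym.eigenvalues = hsym.eigenvalues from funext fun k => rfl] at h

lemma sum_row_sq_eq (M : Matrix (Fin d) (Fin d) ℝ) (i : Fin d) :
    ∑ k, (M i k) ^ 2 = (M * Mᵀ) i i := by
  simp [Matrix.mul_apply, Matrix.transpose_apply, sq]

lemma eigen_sums_aux (X : Matrix (Fin d) (Fin d) ℝ) (lam : Fin d → ℝ)
    (V : Matrix (Fin d) (Fin d) ℝ) (hVtV : Vᵀ * V = 1)
    (hA : X * Xᵀ = V * Matrix.diagonal lam * Vᵀ)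
    (hrows : ∀ i, ∑ j, X i j ^ 2 = 1) :
    (∑ k, lam k) = d ∧ (∑ k, (lam k) ^ 2) = (X * Xᵀ * (X * Xᵀ)).trace := by
  constructor
  · have h1 : (X * Xᵀ).trace = ∑ k, lam k := by
      rw [hA, Matrix.trace_mul_cycle, hVtV, Matrix.one_mul, Matrix.trace_diagonal]
    have h2 : (X * Xᵀ).trace = (d : ℝ) := by
      have hh : ∀ i, (X * Xᵀ) i i = 1 := by
        intro i
        rw [← sum_row_sq_eq X i]
        exact hrows i
      rw [Matrix.trace]
      simp only [Matrix.diag]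
      rw [Finset.sum_congr rfl fun i _ => hh i]
      simp
    rw [← h1, h2]
  · rw [hA]
    have hmm : V * Matrix.diagonal lam * Vᵀ * (V * Matrix.diagonal lam * Vᵀ)
        = V * (Matrix.diagonal lam * Matrix.diagonal lam) * Vᵀ := by
      rw [show V * Matrix.diagonal lam * Vᵀ * (V * Matrix.diagonal lam * Vᵀ)
          = V * Matrix.diagonal lam * (Vᵀ * V) * Matrix.diagonal lam * Vᵀ by
        simp only [Matrix.mul_assoc], hVtV]
      simp only [Matrix.mul_one, Matrix.mul_assoc]
    rw [hmm, Matrix.trace_mul_cycle, hVtV, Matrix.one_mul,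
      Matrix.diagonal_mul_diagonal, Matrix.trace_diagonal]
    exact (Finset.sum_congr rfl fun k _ => sq (lam k))

/-- row sums of squares of `W * X` transported to the diagonal form -/
lemma rowq_transfer (X : Matrix (Fin d) (Fin d) ℝ) (lam : Fin d → ℝ)
    (V : Matrix (Fin d) (Fin d) ℝ) (hVtV : Vᵀ * V = 1)
    (hA : X * Xᵀ = V * Matrix.diagonal lam * Vᵀ)
    (W : Matrix (Fin d) (Fin d) ℝ) (i : Fin d) :
    ∑ k, ((W * Vᵀ * X) i k) ^ 2 = ∑ a, lam a * (W i a) ^ 2 := by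
  rw [sum_row_sq_eq]
  have hMM : (W * Vᵀ * X) * (W * Vᵀ * X)ᵀ = W * Matrix.diagonal lam * Wᵀ := by
    rw [Matrix.transpose_mul, Matrix.transpose_mul, Matrix.transpose_transpose]
    calc (W * Vᵀ * X) * (Xᵀ * (V * Wᵀ))
        = W * Vᵀ * (X * Xᵀ) * V * Wᵀ := by
          simp only [Matrix.mul_assoc]
    _ = W * Vᵀ * (V * Matrix.diagonal lam * Vᵀ) * V * Wᵀ := by rw [hA]
    _ = W * Matrix.diagonal lam * Wᵀ := by
          rw [show W * Vᵀ * (V * Matrix.diagonal lam * Vᵀ) * V * Wᵀ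
              = W * (Vᵀ * V) * (Matrix.diagonal lam * ((Vᵀ * V) * Wᵀ)) by
            simp only [Matrix.mul_assoc], hVtV]
          simp only [Matrix.mul_one, Matrix.one_mul, Matrix.mul_assoc]
  rw [hMM]
  have : ∀ a, (W * Matrix.diagonal lam) i a = W i a * lam a := fun a => Matrix.mul_diagonal _ _ _ _
  simp only [Matrix.mul_apply, Matrix.transpose_apply] at *
  rw [Finset.sum_congr rfl fun a (_ : a ∈ Finset.univ) => by rw [this a]]
  exact Finset.sum_congr rfl fun a _ => by ring

end spectral

section pointwise

variable {d : ℕ}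

lemma pair_bound (D : ℝ) (hD : 0 < D) (u v : ℝ) (hu : 0 ≤ u) (hv : 0 ≤ v) (huv : u + v ≤ D) :
    Real.sqrt u * Real.sqrt v ≤ (u + v) / 2 - (u - v) ^ 2 / (4 * D) := by
  set ru := Real.sqrt u with hru
  set rv := Real.sqrt v with hrv
  have hru2 : ru ^ 2 = u := Real.sq_sqrt hu
  have hrv2 : rv ^ 2 = v := Real.sq_sqrt hv
  have hrun : 0 ≤ ru := Real.sqrt_nonneg u
  have hrvn : 0 ≤ rv := Real.sqrt_nonneg v
  have hkey : (u - v) ^ 2 ≤ 2 * D * (ru - rv) ^ 2 := by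
    have h1 : (ru - rv) ^ 2 * (ru + rv) ^ 2 = (u - v) ^ 2 := by
      rw [← hru2, ← hrv2]; ring
    have h2 : (ru + rv) ^ 2 ≤ 2 * D := by nlinarith [sq_nonneg (ru - rv)]
    nlinarith [sq_nonneg (ru - rv)]
  have h3 : (u - v) ^ 2 / (4 * D) ≤ (ru - rv) ^ 2 / 2 := by
    rw [div_le_div_iff₀ (by positivity) (by norm_num)]
    nlinarith [hkey]
  have h4 : ru * rv = (u + v) / 2 - (ru - rv) ^ 2 / 2 := by
    rw [← hru2, ← hrv2]; ring
  linarith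

lemma pointwise_key (hd : 0 < d) (q : Fin d → ℝ) (hq : ∀ j, 0 ≤ q j)
    (hsum : ∑ j, q j = (d : ℝ)) :
    (∑ j, Real.sqrt (q j)) ^ 2 ≤ (d : ℝ) ^ 2 + d / 2 - (1 / 2) * ∑ j, (q j) ^ 2 := by
  have hD : (0:ℝ) < d := by exact_mod_cast hd
  have hpair : ∀ j k : Fin d, Real.sqrt (q j) * Real.sqrt (q k)
      ≤ (q j + q k) / 2 - (q j - q k) ^ 2 / (4 * d) := by
    intro j k
    rcases eq_or_ne j k with rfl | hjk
    · have : Real.sqrt (q j) * Real.sqrt (q j) = q j := Real.mul_self_sqrt (hq j)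
      rw [this]
      simp
    · apply pair_bound _ hD _ _ (hq j) (hq k)
      calc q j + q k = ∑ z ∈ ({j, k} : Finset (Fin d)), q z := by
            rw [Finset.sum_pair hjk]
      _ ≤ ∑ z, q z := Finset.sum_le_sum_of_subset_of_nonneg (Finset.subset_univ _)
            (fun z _ _ => hq z)
      _ = (d : ℝ) := hsum
  calc (∑ j, Real.sqrt (q j)) ^ 2 = ∑ j, ∑ k, Real.sqrt (q j) * Real.sqrt (q k) := by
        rw [sq, Finset.sum_mul_sum]
  _ ≤ ∑ j, ∑ k, ((q j + q k) / 2 - (q j - q k) ^ 2 / (4 * d)) := by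
        apply Finset.sum_le_sum
        intro j _
        apply Finset.sum_le_sum
        intro k _
        exact hpair j k
  _ = (d : ℝ) ^ 2 + d / 2 - (1 / 2) * ∑ j, (q j) ^ 2 := by
        have hd0 : (d:ℝ) ≠ 0 := ne_of_gt hD
        have hexp : ∀ j k : Fin d, (q j + q k) / 2 - (q j - q k) ^ 2 / (4 * d)
            = q j / 2 + q k / 2 - (q j)^2 / (4*(d:ℝ)) - (q k)^2 / (4*(d:ℝ))
              + (q j * q k) / (2*(d:ℝ)) := by
          intro j k
          field_simp
          ring
        rw [Finset.sum_congr rfl fun j _ => Finset.sum_congr rfl fun k _ => hexp j k]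
        have hinner : ∀ j : Fin d, ∑ k, (q j / 2 + q k / 2 - (q j)^2 / (4*(d:ℝ))
              - (q k)^2 / (4*(d:ℝ)) + (q j * q k) / (2*(d:ℝ)))
            = ((d:ℝ)/2) * q j + (d:ℝ)/2 - ((1:ℝ)/4) * (q j)^2
              - (1/(4*(d:ℝ))) * (∑ k, (q k)^2) + (1/2) * q j := by
          intro j
          rw [Finset.sum_add_distrib, Finset.sum_sub_distrib, Finset.sum_sub_distrib,
            Finset.sum_add_distrib, Finset.sum_const, Finset.sum_const]
          simp only [nsmul_eq_mul, Finset.card_univ, Fintype.card_fin]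
          rw [← Finset.sum_div, ← Finset.sum_div, hsum]
          have hfold : ∑ k, q j * q k / (2*(d:ℝ)) = q j * (d:ℝ) / (2*(d:ℝ)) := by
            rw [← Finset.sum_div, ← Finset.mul_sum, hsum]
          rw [hfold]
          field_simp
        rw [Finset.sum_congr rfl fun j _ => hinner j]
        rw [Finset.sum_add_distrib, Finset.sum_sub_distrib, Finset.sum_sub_distrib,
          Finset.sum_add_distrib]
        have e1 : ∑ j, ((d:ℝ)/2) * q j = (d:ℝ)/2 * (d:ℝ) := by rw [← Finset.mul_sum, hsum]
        have e2 : ∑ _j : Fin d, ((d:ℝ)/2) = (d:ℝ) * ((d:ℝ)/2) := by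
          rw [Finset.sum_const]; simp [Finset.card_univ]
        have e3 : ∑ j, ((1:ℝ)/4) * (q j)^2 = (1/4) * ∑ k, (q k)^2 := by rw [← Finset.mul_sum]
        have e4 : ∑ _j : Fin d, ((1:ℝ)/(4*(d:ℝ))) * (∑ k, (q k)^2)
            = (d:ℝ) * (((1:ℝ)/(4*(d:ℝ))) * ∑ k, (q k)^2) := by
          rw [Finset.sum_const]; simp [Finset.card_univ]; try ring
        have e5 : ∑ j, ((1:ℝ)/2) * q j = ((1:ℝ)/2)*(d:ℝ) := by rw [← Finset.mul_sum, hsum]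
        rw [e1, e2, e3, e4, e5]
        field_simp
        ring
end pointwise

section mainproof
variable {d : ℕ}

lemma measurable_rowq (X : Matrix (Fin d) (Fin d) ℝ) (i : Fin d) :
    Measurable fun W : Matrix (Fin d) (Fin d) ℝ => ∑ k, ((W * X) i k) ^ 2 := by
  apply Finset.measurable_sum
  intro k _
  exact (((measurable_entry i k).comp (measurable_mul_right X))).pow_const 2

lemma measurable_rowNorm_sum (X : Matrix (Fin d) (Fin d) ℝ) :
    Measurable fun W : Matrix (Fin d) (Fin d) ℝ => ∑ j, Real.sqrt (∑ k, ((W * X) j k) ^ 2) := by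
  apply Finset.measurable_sum
  intro j _
  exact (measurable_rowq X j).sqrt

end mainproof


/-- for nonsingular `X` with unit-norm rows, eigenvalues `λ` of `XXᵀ`,
`W` Haar on `O(d)` and `X' = WX`,
`E[(Σ_j ‖X'_{j·}‖)²] ≤ d² − Σ_k (λ_k − 1)²/(2(d+2))`. -/
theorem expected_sum_rowNorm_sq_le {d : ℕ} (hd : 2 ≤ d)
    (X : Matrix (Fin d) (Fin d) ℝ) (hX : X.det ≠ 0)
    (hrows : ∀ i, ∑ j, X i j ^ 2 = 1)
    (hsym : (X * Xᵀ).IsHermitian)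
    (μ : Measure (Matrix (Fin d) (Fin d) ℝ)) (hμ : IsHaarOrthogonal μ) :
    (∫ W, (∑ j, rowNorm (W * X) j) ^ 2 ∂μ) ≤
      (d : ℝ) ^ 2 - (∑ k, (hsym.eigenvalues k - 1) ^ 2) / (2 * ((d : ℝ) + 2)) := by
  have hP : IsProbabilityMeasure μ := hμ.1
  obtain ⟨V, hVtV, hVVt, hA⟩ := real_spectral X hsym
  obtain ⟨hL1, -⟩ := eigen_sums_aux X hsym.eigenvalues V hVtV hA hrows
  set S : ℝ := ∑ k, (hsym.eigenvalues k - 1) ^ 2 with hS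
  have hS0 : 0 ≤ S := Finset.sum_nonneg fun k _ => sq_nonneg _
  have hd0 : 0 < d := by omega
  have hdR : (0:ℝ) < d := by exact_mod_cast hd0
  have hdR1 : (1:ℝ) ≤ d := by exact_mod_cast (by omega : 1 ≤ d)
  -- eigenvalue square sum
  have hL2 : ∑ a, (hsym.eigenvalues a) ^ 2 = S + d := by
    have e : S = ∑ k, ((hsym.eigenvalues k) ^ 2 - 2 * hsym.eigenvalues k + 1) := by
      rw [hS]; exact Finset.sum_congr rfl fun k _ => by ring
    have e2 : ∑ k, ((hsym.eigenvalues k) ^ 2 - 2 * hsym.eigenvalues k + 1)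
        = (∑ k, (hsym.eigenvalues k) ^ 2) - 2 * (∑ k, hsym.eigenvalues k) + d := by
      rw [Finset.sum_add_distrib, Finset.sum_sub_distrib, ← Finset.mul_sum, Finset.sum_const]
      simp [Finset.card_univ]
    rw [e2, hL1] at e
    linarith
  -- trace of X Xᵀ is d
  have htr : (X * Xᵀ).trace = (d:ℝ) := by
    have hh : ∀ i, (X * Xᵀ) i i = 1 := fun i => by rw [← sum_row_sq_eq X i]; exact hrows i
    rw [Matrix.trace]
    simp only [Matrix.diag]
    rw [Finset.sum_congr rfl fun i _ => hh i]
    simp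
  -- a.e. the row-square sums add to d
  have hae_q_sum : ∀ᵐ W ∂μ, ∑ j, (∑ k, ((W * X) j k) ^ 2) = (d:ℝ) := by
    filter_upwards [hμ.2.1] with W hW
    have h1 : ∑ j, (∑ k, ((W * X) j k) ^ 2) = ((W * X) * (W * X)ᵀ).trace := by
      rw [Matrix.trace]
      simp only [Matrix.diag]
      exact Finset.sum_congr rfl fun j _ => sum_row_sq_eq (W * X) j
    have h2 : (W * X) * (W * X)ᵀ = W * (X * Xᵀ) * Wᵀ := by
      rw [Matrix.transpose_mul]
      simp only [Matrix.mul_assoc]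
    have h3 : (W * (X * Xᵀ) * Wᵀ).trace = (X * Xᵀ).trace := by
      rw [Matrix.trace_mul_cycle, ← Matrix.mul_assoc, hW, Matrix.one_mul]
    rw [h1, h2, h3, htr]
  -- a.e. bounds on the row-square sums
  have hq_nonneg : ∀ (W : Matrix (Fin d) (Fin d) ℝ) (j : Fin d),
      0 ≤ ∑ k, ((W * X) j k) ^ 2 := fun W j => Finset.sum_nonneg fun k _ => sq_nonneg _
  have hae_q_le : ∀ᵐ W ∂μ, ∀ j, (∑ k, ((W * X) j k) ^ 2) ≤ (d:ℝ) := by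
    filter_upwards [hae_q_sum] with W hW j
    rw [← hW]
    exact Finset.single_le_sum (fun z (_ : z ∈ Finset.univ) => hq_nonneg W z)
      (Finset.mem_univ j)
  -- main a.e. inequality
  have hmain : ∀ᵐ W ∂μ, (∑ j, rowNorm (W * X) j) ^ 2
      ≤ (d:ℝ) ^ 2 + d / 2 - (1 / 2) * ∑ j, (∑ k, ((W * X) j k) ^ 2) ^ 2 := by
    filter_upwards [hae_q_sum] with W hWsum
    have := pointwise_key hd0 (fun j => ∑ k, ((W * X) j k) ^ 2)
      (fun j => hq_nonneg W j) hWsum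
    simpa [rowNorm] using this
  -- integrability
  have hint_q2 : ∀ j, Integrable (fun W => (∑ k, ((W * X) j k) ^ 2) ^ 2) μ := by
    intro j
    refine integrable_of_bound _ ((measurable_rowq X j).pow_const 2) ((d:ℝ)^2) ?_
    filter_upwards [hae_q_le] with W hW
    rw [abs_of_nonneg (by positivity)]
    have h1 := hq_nonneg W j
    have h2 := hW j
    nlinarith
  have hint_sum2 : Integrable (fun W => ∑ j, (∑ k, ((W * X) j k) ^ 2) ^ 2) μ :=
    integrable_finset_sum _ fun j _ => hint_q2 j
  have hint_RHS : Integrable (fun W =>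
      (d:ℝ) ^ 2 + d / 2 - (1 / 2) * ∑ j, (∑ k, ((W * X) j k) ^ 2) ^ 2) μ :=
    (integrable_const _).sub (hint_sum2.const_mul _)
  have hint_LHS : Integrable (fun W => (∑ j, rowNorm (W * X) j) ^ 2) μ := by
    have hm : Measurable (fun W : Matrix (Fin d) (Fin d) ℝ => (∑ j, rowNorm (W * X) j) ^ 2) := by
      unfold rowNorm
      exact (measurable_rowNorm_sum X).pow_const 2
    refine integrable_of_bound _ hm (((d:ℝ) * d)^2) ?_
    filter_upwards [hae_q_le] with W hW
    rw [abs_of_nonneg (sq_nonneg _)]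
    have hr : ∀ j, rowNorm (W * X) j ≤ (d:ℝ) := by
      intro j
      have h1 : rowNorm (W * X) j = Real.sqrt (∑ k, ((W * X) j k) ^ 2) := rfl
      rw [h1]
      have h2 : (∑ k, ((W * X) j k) ^ 2) ≤ ((d:ℝ))^2 := le_trans (hW j) (by nlinarith)
      calc Real.sqrt (∑ k, ((W * X) j k) ^ 2) ≤ Real.sqrt ((d:ℝ)^2) :=
            Real.sqrt_le_sqrt h2
      _ = (d:ℝ) := Real.sqrt_sq hdR.le
    have hsle : ∑ j, rowNorm (W * X) j ≤ (d:ℝ) * d := by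
      calc ∑ j, rowNorm (W * X) j ≤ ∑ _j : Fin d, (d:ℝ) := Finset.sum_le_sum fun j _ => hr j
      _ = (d:ℝ) * d := by rw [Finset.sum_const]; simp [Finset.card_univ]; try ring
    have hsnn : 0 ≤ ∑ j, rowNorm (W * X) j :=
      Finset.sum_nonneg fun j _ => Real.sqrt_nonneg _
    nlinarith
  -- integrate the main inequality
  have hI := integral_mono_ae hint_LHS hint_RHS hmain
  -- value of each ∫ q_j²
  have hq2val : ∀ j, ∫ W, (∑ k, ((W * X) j k) ^ 2) ^ 2 ∂μ
      = ((d:ℝ) ^ 2 + 2 * (S + d)) / ((d:ℝ) * ((d:ℝ) + 2)) := by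
    intro j
    have hVt_orth : (Vᵀ)ᵀ * Vᵀ = 1 := by rw [Matrix.transpose_transpose]; exact hVVt
    have hf : Measurable fun W : Matrix (Fin d) (Fin d) ℝ => (∑ k, ((W * X) j k) ^ 2) ^ 2 :=
      (measurable_rowq X j).pow_const 2
    have h := integral_mul_right_eq hμ hVt_orth _ hf.aestronglyMeasurable
    rw [← h]
    have hpt : ∀ W : Matrix (Fin d) (Fin d) ℝ,
        (fun W => (∑ k, ((W * X) j k) ^ 2) ^ 2) (W * Vᵀ)
          = (∑ a, hsym.eigenvalues a * (W j a) ^ 2) ^ 2 := by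
      intro W
      simp only
      rw [rowq_transfer X hsym.eigenvalues V hVtV hA W j]
    rw [integral_congr_ae (Filter.Eventually.of_forall hpt)]
    rw [qform_moment hμ (by omega) j hsym.eigenvalues, hL1, hL2]
  -- value of the RHS integral
  have hRHSval : ∫ W, ((d:ℝ) ^ 2 + d / 2 - (1 / 2) * ∑ j, (∑ k, ((W * X) j k) ^ 2) ^ 2) ∂μ
      = (d:ℝ) ^ 2 + d / 2
        - (1 / 2) * ((d:ℝ) * (((d:ℝ) ^ 2 + 2 * (S + d)) / ((d:ℝ) * ((d:ℝ) + 2)))) := by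
    rw [integral_sub (integrable_const _) (hint_sum2.const_mul _), integral_const,
      integral_const_mul, integral_finset_sum _ fun j _ => hint_q2 j]
    rw [Finset.sum_congr rfl fun j _ => hq2val j, Finset.sum_const]
    simp [Finset.card_univ, measure_univ]
  rw [hRHSval] at hI
  -- final arithmetic
  have harith : (d:ℝ) ^ 2 + d / 2
      - (1 / 2) * ((d:ℝ) * (((d:ℝ) ^ 2 + 2 * (S + d)) / ((d:ℝ) * ((d:ℝ) + 2))))
      = (d:ℝ) ^ 2 - S / ((d:ℝ) + 2) := by
    field_simp
    ring
  rw [harith] at hI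
  refine le_trans hI ?_
  have hdiv : S / (2 * ((d:ℝ) + 2)) ≤ S / ((d:ℝ) + 2) := by
    rw [div_le_div_iff₀ (by linarith) (by linarith)]
    nlinarith
  linarith [hdiv]
end
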